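/- arXiv:2105.02760 — 2 statements merged into one kernel-verified Lean document; each statement's English description precedes it below -/
import Mathlib

section
/- Let K be a finite field and S a sharply transitive subset of PGL(2,K) acting on P^1(K). If S contains elements g1, g2, g3, g4 represented by matrices [[0,b1],[c1,d1]], [[a2,0],[c2,d2]], [[a3,b3],[0,d3]], [[a4,b4],[c4,0]] respectively (each with one prescribed zero entry), then b1*d2*a3*c4 = c1*a2*d3*b4 as elements of K, up to the scalar ambiguity of the matrix representatives (i.e., the equality holds for appropriately normalized representatives, equivalently the ratio (b1 d2 a3 c4)/(c1 a2 d3 b4) equals 1). -/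
open Matrix Projectivization

noncomputable section

variable {K : Type*} [Field K]

/-- The projective line over `K`. -/
abbrev P1 (K : Type*) [Field K] := Projectivization K (Fin 2 → K)

/-- `PGL(2,K)`, the quotient of `GL(2,K)` by its center. -/
abbrev PGL2 (K : Type*) [Field K] :=
  GL (Fin 2) K ⧸ Subgroup.center (GL (Fin 2) K)

/-- The canonical projection `GL(2,K) → PGL(2,K)`. -/
def PGL2.proj (K : Type*) [Field K] : GL (Fin 2) K →* PGL2 K :=
  QuotientGroup.mk' _

instance glAction : MulAction (GL (Fin 2) K) (P1 K) where
  smul g x := x.map ((Matrix.GeneralLinearGroup.toLin g).toLinearEquiv : (Fin 2 → K) →ₗ[K] (Fin 2 → K))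
    (Matrix.GeneralLinearGroup.toLin g).toLinearEquiv.injective
  one_smul x := by
    induction x using Projectivization.ind with
    | h v hv =>
      show Projectivization.map _ _ _ = _
      rw [Projectivization.map_mk]
      congr 1
      rw [_root_.map_one]; rfl
  mul_smul g h x := by
    induction x using Projectivization.ind with
    | h v hv =>
      show Projectivization.map _ _ _ = Projectivization.map _ _ (Projectivization.map _ _ _)
      rw [Projectivization.map_mk, Projectivization.map_mk, Projectivization.map_mk]
      congr 1
      show ((↑g : Matrix (Fin 2) (Fin 2) K) * (↑h : Matrix (Fin 2) (Fin 2) K)) *ᵥ v = (↑g : Matrix (Fin 2) (Fin 2) K) *ᵥ ((↑h : Matrix (Fin 2) (Fin 2) K) *ᵥ v)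
      rw [Matrix.mulVec_mulVec]

theorem gl_smul_mk (g : GL (Fin 2) K) (v : Fin 2 → K) (hv : v ≠ 0) :
    g • Projectivization.mk K v hv =
      Projectivization.mk K ((↑g : Matrix (Fin 2) (Fin 2) K) *ᵥ v)
        ((Matrix.GeneralLinearGroup.toLin g).toLinearEquiv.map_ne_zero_iff.mpr hv) := by
  show Projectivization.map _ _ _ = _
  rw [Projectivization.map_mk]
  rfl

theorem center_smul_eq (g : GL (Fin 2) K) (hg : g ∈ Subgroup.center (GL (Fin 2) K)) (x : P1 K) :
    g • x = x := by
  have hcomm : ∀ B : GL (Fin 2) K, B * g = g * B := fun B => Subgroup.mem_center_iff.mp hg B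
  have key : ∀ M : Matrix (Fin 2) (Fin 2) K, M.det ≠ 0 →
      M * (↑g : Matrix (Fin 2) (Fin 2) K) = (↑g : Matrix (Fin 2) (Fin 2) K) * M := by
    intro M hM
    have := hcomm (Matrix.GeneralLinearGroup.mkOfDetNeZero M hM)
    exact congrArg Units.val this
  have h1 : !![(1:K),1;0,1] * (↑g : Matrix (Fin 2) (Fin 2) K) = (↑g : Matrix (Fin 2) (Fin 2) K) * !![(1:K),1;0,1] := key _ (by simp [Matrix.det_fin_two_of])
  have h2 : !![(1:K),0;1,1] * (↑g : Matrix (Fin 2) (Fin 2) K) = (↑g : Matrix (Fin 2) (Fin 2) K) * !![(1:K),0;1,1] := key _ (by simp [Matrix.det_fin_two_of])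
  have e1 := fun i j => congrFun (congrFun h1 i) j
  have e2 := fun i j => congrFun (congrFun h2 i) j
  have hc : (↑g : Matrix (Fin 2) (Fin 2) K) 1 0 = 0 := by
    have := e1 0 0
    simp [Matrix.mul_apply, Fin.sum_univ_two] at this
    linear_combination this
  have hb : (↑g : Matrix (Fin 2) (Fin 2) K) 0 1 = 0 := by
    have := e2 1 1
    simp [Matrix.mul_apply, Fin.sum_univ_two] at this
    linear_combination this
  have had : (↑g : Matrix (Fin 2) (Fin 2) K) 0 0 = (↑g : Matrix (Fin 2) (Fin 2) K) 1 1 := by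
    have := e1 0 1
    simp [Matrix.mul_apply, Fin.sum_univ_two] at this
    linear_combination -this
  -- so A is scalar
  induction x using Projectivization.ind with
  | h v hv =>
    rw [gl_smul_mk]
    refine (Projectivization.mk_eq_mk_iff' ..).mpr ?_
    refine ⟨(↑g : Matrix (Fin 2) (Fin 2) K) 0 0, ?_⟩
    funext i
    fin_cases i <;>
      simp [Matrix.mulVec, dotProduct, Fin.sum_univ_two, hc, hb, ← had, mul_comm]

instance pglAction : MulAction (PGL2 K) (P1 K) :=
  MulAction.compHom _ (QuotientGroup.lift (Subgroup.center (GL (Fin 2) K))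
    (MulAction.toPermHom (GL (Fin 2) K) (P1 K))
    (fun g hg => by
      ext x
      exact center_smul_eq g hg x))

/-- A subset `S` of `PGL(2,K)` is sharply transitive (regular) on the projective line if
for all `x, y` there is a unique `g ∈ S` with `g • x = y`. -/
def SharplyTransitive (S : Set (PGL2 K)) : Prop :=
  ∀ x y : P1 K, ∃! g : PGL2 K, g ∈ S ∧ g • x = y

/-- The point `(1 : 0)` of the projective line. -/
def pt10 (K : Type*) [Field K] : P1 K :=
  Projectivization.mk K ![1, 0] (by intro h; simpa using congrFun h 0)

/-- The point `(0 : 1)` of the projective line. -/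
def pt01 (K : Type*) [Field K] : P1 K :=
  Projectivization.mk K ![0, 1] (by intro h; simpa using congrFun h 1)


section LoTAux

open scoped Classical

instance [Fintype K] : Finite (P1 K) := Quotient.finite _

noncomputable instance [Fintype K] : Fintype (P1 K) := Fintype.ofFinite _

noncomputable instance [Fintype K] : Fintype (PGL2 K) := Fintype.ofFinite _

theorem LoT.mk_eq_pt10_iff (v : Fin 2 → K) (hv : v ≠ 0) :
    Projectivization.mk K v hv = pt10 K ↔ v 1 = 0 := by
  rw [show pt10 K = Projectivization.mk K ![1, 0] (by intro h; simpa using congrFun h 0) from rfl,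
    Projectivization.mk_eq_mk_iff']
  constructor
  · rintro ⟨a, ha⟩
    simpa using (congrFun ha 1).symm
  · intro h
    refine ⟨v 0, ?_⟩
    funext i
    fin_cases i <;> simp [h]

theorem LoT.mk_eq_pt01_iff (v : Fin 2 → K) (hv : v ≠ 0) :
    Projectivization.mk K v hv = pt01 K ↔ v 0 = 0 := by
  rw [show pt01 K = Projectivization.mk K ![0, 1] (by intro h; simpa using congrFun h 1) from rfl,
    Projectivization.mk_eq_mk_iff']
  constructor
  · rintro ⟨a, ha⟩
    simpa using (congrFun ha 0).symm
  · intro h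
    refine ⟨v 1, ?_⟩
    funext i
    fin_cases i <;> simp [h]

/-- The affine coordinate of a point of `P1`. -/
noncomputable def LoT.ratio (p : P1 K) : K := p.rep 0 * (p.rep 1)⁻¹

theorem LoT.ratio_mk (v : Fin 2 → K) (hv : v ≠ 0) :
    LoT.ratio (Projectivization.mk K v hv) = v 0 * (v 1)⁻¹ := by
  obtain ⟨a, ha⟩ := Projectivization.exists_smul_eq_mk_rep K v hv
  unfold LoT.ratio
  rw [← ha]
  have h0 : ((a • v) 0 : K) = (a : K) * v 0 := rfl
  have h1 : ((a • v) 1 : K) = (a : K) * v 1 := rfl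
  rw [h0, h1, mul_inv, mul_mul_mul_comm, mul_inv_cancel₀ (a.ne_zero), one_mul]

theorem LoT.proj_smul (g : GL (Fin 2) K) (x : P1 K) : PGL2.proj K g • x = g • x := rfl

theorem LoT.smul_pt10 (M : GL (Fin 2) K) :
    PGL2.proj K M • pt10 K =
      Projectivization.mk K ((↑M : Matrix (Fin 2) (Fin 2) K) *ᵥ ![1, 0])
        (show (↑M : Matrix (Fin 2) (Fin 2) K) *ᵥ ![1, 0] ≠ 0 from
        (Matrix.GeneralLinearGroup.toLin M).toLinearEquiv.map_ne_zero_iff.mpr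
          (by intro h; simpa using congrFun h 0)) :=
  gl_smul_mk M ![1, 0] _

theorem LoT.smul_pt01 (M : GL (Fin 2) K) :
    PGL2.proj K M • pt01 K =
      Projectivization.mk K ((↑M : Matrix (Fin 2) (Fin 2) K) *ᵥ ![0, 1])
        (show (↑M : Matrix (Fin 2) (Fin 2) K) *ᵥ ![0, 1] ≠ 0 from
        (Matrix.GeneralLinearGroup.toLin M).toLinearEquiv.map_ne_zero_iff.mpr
          (by intro h; simpa using congrFun h 1)) :=
  gl_smul_mk M ![0, 1] _

theorem LoT.mulVec10 (m : Matrix (Fin 2) (Fin 2) K) : m *ᵥ ![1, 0] = ![m 0 0, m 1 0] := by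
  funext i
  fin_cases i <;> simp [Matrix.mulVec, dotProduct, Fin.sum_univ_two]

theorem LoT.mulVec01 (m : Matrix (Fin 2) (Fin 2) K) : m *ᵥ ![0, 1] = ![m 0 1, m 1 1] := by
  funext i
  fin_cases i <;> simp [Matrix.mulVec, dotProduct, Fin.sum_univ_two]

theorem LoT.ratio_smul_pt10 (M : GL (Fin 2) K) :
    LoT.ratio (PGL2.proj K M • pt10 K) =
      (↑M : Matrix (Fin 2) (Fin 2) K) 0 0 * ((↑M : Matrix (Fin 2) (Fin 2) K) 1 0)⁻¹ := by
  rw [LoT.smul_pt10, LoT.ratio_mk, LoT.mulVec10]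
  simp

theorem LoT.ratio_smul_pt01 (M : GL (Fin 2) K) :
    LoT.ratio (PGL2.proj K M • pt01 K) =
      (↑M : Matrix (Fin 2) (Fin 2) K) 0 1 * ((↑M : Matrix (Fin 2) (Fin 2) K) 1 1)⁻¹ := by
  rw [LoT.smul_pt01, LoT.ratio_mk, LoT.mulVec01]
  simp

theorem LoT.smul_pt10_eq_pt10_iff (M : GL (Fin 2) K) :
    PGL2.proj K M • pt10 K = pt10 K ↔ (↑M : Matrix (Fin 2) (Fin 2) K) 1 0 = 0 := by
  rw [LoT.smul_pt10, LoT.mk_eq_pt10_iff, LoT.mulVec10]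
  simp

theorem LoT.smul_pt10_eq_pt01_iff (M : GL (Fin 2) K) :
    PGL2.proj K M • pt10 K = pt01 K ↔ (↑M : Matrix (Fin 2) (Fin 2) K) 0 0 = 0 := by
  rw [LoT.smul_pt10, LoT.mk_eq_pt01_iff, LoT.mulVec10]
  simp

theorem LoT.smul_pt01_eq_pt10_iff (M : GL (Fin 2) K) :
    PGL2.proj K M • pt01 K = pt10 K ↔ (↑M : Matrix (Fin 2) (Fin 2) K) 1 1 = 0 := by
  rw [LoT.smul_pt01, LoT.mk_eq_pt10_iff, LoT.mulVec01]
  simp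

theorem LoT.smul_pt01_eq_pt01_iff (M : GL (Fin 2) K) :
    PGL2.proj K M • pt01 K = pt01 K ↔ (↑M : Matrix (Fin 2) (Fin 2) K) 0 1 = 0 := by
  rw [LoT.smul_pt01, LoT.mk_eq_pt01_iff, LoT.mulVec01]
  simp

theorem LoT.det_ne_zero (M : GL (Fin 2) K) : (↑M : Matrix (Fin 2) (Fin 2) K).det ≠ 0 :=
  ((Matrix.isUnit_iff_isUnit_det _).mp M.isUnit).ne_zero

theorem LoT.ratio_inv_smul_pt10 (M : GL (Fin 2) K) :
    LoT.ratio ((PGL2.proj K M)⁻¹ • pt10 K) =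
      (↑M : Matrix (Fin 2) (Fin 2) K) 1 1 * (-(↑M : Matrix (Fin 2) (Fin 2) K) 1 0)⁻¹ := by
  set m : Matrix (Fin 2) (Fin 2) K := (↑M : Matrix (Fin 2) (Fin 2) K) with hm
  have hdet : m.det ≠ 0 := LoT.det_ne_zero M
  have hv : (![m 1 1, -m 1 0] : Fin 2 → K) ≠ 0 := by
    intro h
    have h0 := congrFun h 0
    have h1 := congrFun h 1
    simp at h0 h1
    apply hdet
    rw [Matrix.det_fin_two, h0, h1]
    ring
  have key : PGL2.proj K M • Projectivization.mk K ![m 1 1, -m 1 0] hv = pt10 K := by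
    rw [LoT.proj_smul, gl_smul_mk]
    refine (LoT.mk_eq_pt10_iff _ _).mpr ?_
    simp [← hm, Matrix.mulVec, dotProduct, Fin.sum_univ_two]
    ring
  rw [inv_smul_eq_iff.mpr key.symm, LoT.ratio_mk]
  simp

theorem LoT.ratio_inv_smul_pt01 (M : GL (Fin 2) K) :
    LoT.ratio ((PGL2.proj K M)⁻¹ • pt01 K) =
      (-(↑M : Matrix (Fin 2) (Fin 2) K) 0 1) * ((↑M : Matrix (Fin 2) (Fin 2) K) 0 0)⁻¹ := by
  set m : Matrix (Fin 2) (Fin 2) K := (↑M : Matrix (Fin 2) (Fin 2) K) with hm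
  have hdet : m.det ≠ 0 := LoT.det_ne_zero M
  have hv : (![-m 0 1, m 0 0] : Fin 2 → K) ≠ 0 := by
    intro h
    have h0 := congrFun h 0
    have h1 := congrFun h 1
    simp at h0 h1
    apply hdet
    rw [Matrix.det_fin_two, h0, h1]
    ring
  have key : PGL2.proj K M • Projectivization.mk K ![-m 0 1, m 0 0] hv = pt01 K := by
    rw [LoT.proj_smul, gl_smul_mk]
    refine (LoT.mk_eq_pt01_iff _ _).mpr ?_
    simp [← hm, Matrix.mulVec, dotProduct, Fin.sum_univ_two]
    ring
  rw [inv_smul_eq_iff.mpr key.symm, LoT.ratio_mk]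
  simp

theorem LoT.prod_ratio [Fintype K] :
    ∏ p ∈ Finset.univ.filter (fun p : P1 K => p ≠ pt10 K ∧ p ≠ pt01 K), LoT.ratio p = -1 := by
  have main : ∏ u : Kˣ, ((u : K)) =
      ∏ p ∈ Finset.univ.filter (fun p : P1 K => p ≠ pt10 K ∧ p ≠ pt01 K), LoT.ratio p := by
    have hne : ∀ u : Kˣ, (![(u : K), 1] : Fin 2 → K) ≠ 0 := by
      intro u h
      simpa using congrFun h 1
    refine Finset.prod_bij (fun u _ => Projectivization.mk K ![(u : K), 1] (hne u)) ?_ ?_ ?_ ?_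
    · intro u _
      simp only [Finset.mem_filter, Finset.mem_univ, true_and]
      constructor
      · intro h
        have := (LoT.mk_eq_pt10_iff _ _).mp h
        simp at this
      · intro h
        have := (LoT.mk_eq_pt01_iff _ _).mp h
        simp at this
    · intro u _ w _ h
      rw [Projectivization.mk_eq_mk_iff'] at h
      obtain ⟨a, ha⟩ := h
      have h1 := congrFun ha 1
      have h0 := congrFun ha 0
      simp at h0 h1
      ext
      rw [← h0, h1, one_mul]
    · intro p hp
      simp only [Finset.mem_filter, Finset.mem_univ, true_and] at hp
      obtain ⟨v, hv, rfl⟩ : ∃ v hv, p = Projectivization.mk K v hv :=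
        ⟨p.rep, p.rep_nonzero, (p.mk_rep).symm⟩
      have hv1 : v 1 ≠ 0 := fun h => hp.1 ((LoT.mk_eq_pt10_iff v hv).mpr h)
      have hv0 : v 0 ≠ 0 := fun h => hp.2 ((LoT.mk_eq_pt01_iff v hv).mpr h)
      refine ⟨Units.mk0 (v 0 * (v 1)⁻¹) (by simp [hv0, hv1]), Finset.mem_univ _, ?_⟩
      rw [Projectivization.mk_eq_mk_iff']
      refine ⟨(v 1)⁻¹, ?_⟩
      funext i
      fin_cases i <;> simp [mul_comm, hv1]
    · intro u _
      rw [LoT.ratio_mk]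
      simp
  rw [← main]
  have h := FiniteField.prod_univ_units_id_eq_neg_one (K := K)
  have h2 := map_prod (Units.coeHom K) (fun u : Kˣ => u) Finset.univ
  simp only [Units.coeHom_apply] at h2
  rw [← h2, h]
  simp

theorem LoT.prod_key [Fintype K] (S : Set (PGL2 K)) (φ : PGL2 K → P1 K)
    (hφ : ∀ p : P1 K, ∃! g, g ∈ S ∧ φ g = p) :
    ∏ g ∈ (Set.toFinite S).toFinset.filter (fun g => φ g ≠ pt10 K ∧ φ g ≠ pt01 K),
      LoT.ratio (φ g) = -1 := by
  rw [← LoT.prod_ratio (K := K)]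
  refine Finset.prod_bij (fun g _ => φ g) ?_ ?_ ?_ ?_
  · intro a ha
    simp only [Finset.mem_filter, Set.Finite.mem_toFinset] at ha
    simp only [Finset.mem_filter, Finset.mem_univ, true_and]
    exact ha.2
  · intro a ha b hb h
    simp only [Finset.mem_filter, Set.Finite.mem_toFinset] at ha hb
    exact (hφ (φ a)).unique ⟨ha.1, rfl⟩ ⟨hb.1, h.symm⟩
  · intro p hp
    simp only [Finset.mem_filter, Finset.mem_univ, true_and] at hp
    obtain ⟨g, ⟨hgS, hg⟩, -⟩ := hφ p
    refine ⟨g, ?_, hg⟩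
    simp only [Finset.mem_filter, Set.Finite.mem_toFinset]
    exact ⟨hgS, by rw [hg]; exact hp.1, by rw [hg]; exact hp.2⟩
  · intro a _
    rfl


theorem LoT.termwise (g : PGL2 K) (h10 : g • pt10 K ≠ pt10 K) (h01 : g • pt10 K ≠ pt01 K)
    (h10' : g • pt01 K ≠ pt10 K) (h01' : g • pt01 K ≠ pt01 K) :
    LoT.ratio (g • pt10 K) * LoT.ratio (g⁻¹ • pt01 K) =
      LoT.ratio (g • pt01 K) * LoT.ratio (g⁻¹ • pt10 K) := by
  obtain ⟨M, rfl⟩ := QuotientGroup.mk'_surjective (Subgroup.center (GL (Fin 2) K)) g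
  have hproj : QuotientGroup.mk' (Subgroup.center (GL (Fin 2) K)) M = PGL2.proj K M := rfl
  rw [hproj] at h10 h01 h10' h01' ⊢
  have hα : (↑M : Matrix (Fin 2) (Fin 2) K) 0 0 ≠ 0 :=
    fun h => h01 ((LoT.smul_pt10_eq_pt01_iff M).mpr h)
  have hγ : (↑M : Matrix (Fin 2) (Fin 2) K) 1 0 ≠ 0 :=
    fun h => h10 ((LoT.smul_pt10_eq_pt10_iff M).mpr h)
  have hβ : (↑M : Matrix (Fin 2) (Fin 2) K) 0 1 ≠ 0 :=
    fun h => h01' ((LoT.smul_pt01_eq_pt01_iff M).mpr h)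
  have hδ : (↑M : Matrix (Fin 2) (Fin 2) K) 1 1 ≠ 0 :=
    fun h => h10' ((LoT.smul_pt01_eq_pt10_iff M).mpr h)
  rw [LoT.ratio_smul_pt10, LoT.ratio_smul_pt01, LoT.ratio_inv_smul_pt10, LoT.ratio_inv_smul_pt01]
  set α := (↑M : Matrix (Fin 2) (Fin 2) K) 0 0
  set β := (↑M : Matrix (Fin 2) (Fin 2) K) 0 1
  set γ := (↑M : Matrix (Fin 2) (Fin 2) K) 1 0
  set δ := (↑M : Matrix (Fin 2) (Fin 2) K) 1 1
  calc α * γ⁻¹ * (-β * α⁻¹) = α * α⁻¹ * (-β * γ⁻¹) := by ring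
    _ = -β * γ⁻¹ := by rw [mul_inv_cancel₀ hα, one_mul]
    _ = β * (-γ)⁻¹ := by rw [inv_neg]; ring
    _ = δ * δ⁻¹ * (β * (-γ)⁻¹) := by rw [mul_inv_cancel₀ hδ, one_mul]
    _ = β * δ⁻¹ * (δ * (-γ)⁻¹) := by ring

theorem LoT.master [Fintype K] (S : Set (PGL2 K)) (hS : SharplyTransitive S)
    (g1 g2 g3 g4 : PGL2 K) (h1 : g1 ∈ S) (h2 : g2 ∈ S) (h3 : g3 ∈ S) (h4 : g4 ∈ S)
    (e1 : g1 • pt10 K = pt01 K) (e2 : g2 • pt01 K = pt01 K)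
    (e3 : g3 • pt10 K = pt10 K) (e4 : g4 • pt01 K = pt10 K) :
    (∏ g ∈ ({g1, g2, g3, g4} : Finset (PGL2 K)) \ {g1, g3}, LoT.ratio (g • pt10 K)) *
        (∏ g ∈ ({g1, g2, g3, g4} : Finset (PGL2 K)) \ {g1, g2}, LoT.ratio (g⁻¹ • pt01 K)) =
      (∏ g ∈ ({g1, g2, g3, g4} : Finset (PGL2 K)) \ {g2, g4}, LoT.ratio (g • pt01 K)) *
        (∏ g ∈ ({g1, g2, g3, g4} : Finset (PGL2 K)) \ {g3, g4}, LoT.ratio (g⁻¹ • pt10 K)) := by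
  classical
  set F := (Set.toFinite S).toFinset with hF
  set E : Finset (PGL2 K) := {g1, g2, g3, g4} with hE
  have hEF : E ⊆ F := by
    intro g hg
    simp only [hE, Finset.mem_insert, Finset.mem_singleton] at hg
    simp only [hF, Set.Finite.mem_toFinset]
    rcases hg with rfl | rfl | rfl | rfl <;> assumption
  have hc1' : ∀ g ∈ S, g • pt10 K = pt01 K → g = g1 :=
    fun g hg e => (hS (pt10 K) (pt01 K)).unique ⟨hg, e⟩ ⟨h1, e1⟩
  have hc2' : ∀ g ∈ S, g • pt01 K = pt01 K → g = g2 :=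
    fun g hg e => (hS (pt01 K) (pt01 K)).unique ⟨hg, e⟩ ⟨h2, e2⟩
  have hc3' : ∀ g ∈ S, g • pt10 K = pt10 K → g = g3 :=
    fun g hg e => (hS (pt10 K) (pt10 K)).unique ⟨hg, e⟩ ⟨h3, e3⟩
  have hc4' : ∀ g ∈ S, g • pt01 K = pt10 K → g = g4 :=
    fun g hg e => (hS (pt01 K) (pt10 K)).unique ⟨hg, e⟩ ⟨h4, e4⟩
  have split : ∀ (f : PGL2 K → K) (s : Finset (PGL2 K)), s ⊆ E →
      ∏ g ∈ F \ s, f g = (∏ g ∈ F \ E, f g) * ∏ g ∈ E \ s, f g := by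
    intro f s hsE
    have hsub : E \ s ⊆ F \ s := Finset.sdiff_subset_sdiff hEF (Finset.Subset.refl s)
    rw [← Finset.prod_sdiff hsub]
    have hset : (F \ s) \ (E \ s) = F \ E := by
      ext g
      simp only [Finset.mem_sdiff]
      constructor
      · rintro ⟨⟨hgF, hgs⟩, hnE⟩
        exact ⟨hgF, fun hE' => hnE ⟨hE', hgs⟩⟩
      · rintro ⟨hgF, hgE⟩
        exact ⟨⟨hgF, fun hs => hgE (hsE hs)⟩, fun hmem => hgE hmem.1⟩
    rw [hset]
  have s13 : ({g1, g3} : Finset (PGL2 K)) ⊆ E := by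
    intro g hg
    simp only [Finset.mem_insert, Finset.mem_singleton] at hg
    simp only [hE, Finset.mem_insert, Finset.mem_singleton]
    tauto
  have s12 : ({g1, g2} : Finset (PGL2 K)) ⊆ E := by
    intro g hg
    simp only [Finset.mem_insert, Finset.mem_singleton] at hg
    simp only [hE, Finset.mem_insert, Finset.mem_singleton]
    tauto
  have s24 : ({g2, g4} : Finset (PGL2 K)) ⊆ E := by
    intro g hg
    simp only [Finset.mem_insert, Finset.mem_singleton] at hg
    simp only [hE, Finset.mem_insert, Finset.mem_singleton]
    tauto
  have s34 : ({g3, g4} : Finset (PGL2 K)) ⊆ E := by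
    intro g hg
    simp only [Finset.mem_insert, Finset.mem_singleton] at hg
    simp only [hE, Finset.mem_insert, Finset.mem_singleton]
    tauto
  -- the four global product identities
  have tA : F.filter (fun g => g • pt10 K ≠ pt10 K ∧ g • pt10 K ≠ pt01 K) = F \ {g1, g3} := by
    ext g
    simp only [Finset.mem_filter, Finset.mem_sdiff, Finset.mem_insert, Finset.mem_singleton,
      hF, Set.Finite.mem_toFinset]
    constructor
    · rintro ⟨hg, hn10, hn01⟩
      refine ⟨hg, ?_⟩
      rintro (rfl | rfl)
      · exact hn01 e1
      · exact hn10 e3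
    · rintro ⟨hg, hn⟩
      push_neg at hn
      exact ⟨hg, fun h => hn.2 (hc3' g hg h), fun h => hn.1 (hc1' g hg h)⟩
  have tB : F.filter (fun g => g • pt01 K ≠ pt10 K ∧ g • pt01 K ≠ pt01 K) = F \ {g2, g4} := by
    ext g
    simp only [Finset.mem_filter, Finset.mem_sdiff, Finset.mem_insert, Finset.mem_singleton,
      hF, Set.Finite.mem_toFinset]
    constructor
    · rintro ⟨hg, hn10, hn01⟩
      refine ⟨hg, ?_⟩
      rintro (rfl | rfl)
      · exact hn01 e2
      · exact hn10 e4
    · rintro ⟨hg, hn⟩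
      push_neg at hn
      exact ⟨hg, fun h => hn.2 (hc4' g hg h), fun h => hn.1 (hc2' g hg h)⟩
  have tC : F.filter (fun g => g⁻¹ • pt10 K ≠ pt10 K ∧ g⁻¹ • pt10 K ≠ pt01 K) = F \ {g3, g4} := by
    ext g
    simp only [Finset.mem_filter, Finset.mem_sdiff, Finset.mem_insert, Finset.mem_singleton,
      hF, Set.Finite.mem_toFinset, ne_eq, inv_smul_eq_iff]
    constructor
    · rintro ⟨hg, hn10, hn01⟩
      refine ⟨hg, ?_⟩
      rintro (rfl | rfl)
      · exact hn10 e3.symm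
      · exact hn01 e4.symm
    · rintro ⟨hg, hn⟩
      push_neg at hn
      exact ⟨hg, fun h => hn.1 (hc3' g hg h.symm), fun h => hn.2 (hc4' g hg h.symm)⟩
  have tD : F.filter (fun g => g⁻¹ • pt01 K ≠ pt10 K ∧ g⁻¹ • pt01 K ≠ pt01 K) = F \ {g1, g2} := by
    ext g
    simp only [Finset.mem_filter, Finset.mem_sdiff, Finset.mem_insert, Finset.mem_singleton,
      hF, Set.Finite.mem_toFinset, ne_eq, inv_smul_eq_iff]
    constructor
    · rintro ⟨hg, hn10, hn01⟩
      refine ⟨hg, ?_⟩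
      rintro (rfl | rfl)
      · exact hn10 e1.symm
      · exact hn01 e2.symm
    · rintro ⟨hg, hn⟩
      push_neg at hn
      exact ⟨hg, fun h => hn.1 (hc1' g hg h.symm), fun h => hn.2 (hc2' g hg h.symm)⟩
  have kA := LoT.prod_key S (fun g => g • pt10 K) (fun p => hS (pt10 K) p)
  have kB := LoT.prod_key S (fun g => g • pt01 K) (fun p => hS (pt01 K) p)
  have kC := LoT.prod_key S (fun g => g⁻¹ • pt10 K) (fun p => by
    obtain ⟨g, ⟨hgS, hg⟩, hu⟩ := hS p (pt10 K)
    refine ⟨g, ⟨hgS, inv_smul_eq_iff.mpr hg.symm⟩, ?_⟩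
    rintro h ⟨hhS, hh⟩
    exact hu h ⟨hhS, (inv_smul_eq_iff.mp hh).symm⟩)
  have kD := LoT.prod_key S (fun g => g⁻¹ • pt01 K) (fun p => by
    obtain ⟨g, ⟨hgS, hg⟩, hu⟩ := hS p (pt01 K)
    refine ⟨g, ⟨hgS, inv_smul_eq_iff.mpr hg.symm⟩, ?_⟩
    rintro h ⟨hhS, hh⟩
    exact hu h ⟨hhS, (inv_smul_eq_iff.mp hh).symm⟩)
  beta_reduce at kA kB kC kD
  rw [← hF] at kA kB kC kD
  rw [tA, split _ _ s13] at kA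
  rw [tB, split _ _ s24] at kB
  rw [tC, split _ _ s34] at kC
  rw [tD, split _ _ s12] at kD
  have hterm : ∀ g ∈ F \ E,
      LoT.ratio (g • pt10 K) * LoT.ratio (g⁻¹ • pt01 K) =
        LoT.ratio (g • pt01 K) * LoT.ratio (g⁻¹ • pt10 K) := by
    intro g hg
    simp only [Finset.mem_sdiff, hF, Set.Finite.mem_toFinset, hE, Finset.mem_insert,
      Finset.mem_singleton] at hg
    obtain ⟨hgS, hgE⟩ := hg
    push_neg at hgE
    obtain ⟨ne1, ne2, ne3, ne4⟩ := hgE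
    exact LoT.termwise g (fun h => ne3 (hc3' g hgS h)) (fun h => ne1 (hc1' g hgS h))
      (fun h => ne4 (hc4' g hgS h)) (fun h => ne2 (hc2' g hgS h))
  have eqT : (∏ g ∈ F \ E, LoT.ratio (g • pt10 K)) * (∏ g ∈ F \ E, LoT.ratio (g⁻¹ • pt01 K)) =
      (∏ g ∈ F \ E, LoT.ratio (g • pt01 K)) * (∏ g ∈ F \ E, LoT.ratio (g⁻¹ • pt10 K)) := by
    rw [← Finset.prod_mul_distrib, ← Finset.prod_mul_distrib]
    exact Finset.prod_congr rfl hterm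
  have hY : (∏ g ∈ F \ E, LoT.ratio (g • pt01 K)) ≠ 0 := by
    intro h
    rw [h, zero_mul] at kB
    exact (neg_ne_zero.mpr (one_ne_zero)) kB.symm
  have hZ : (∏ g ∈ F \ E, LoT.ratio (g⁻¹ • pt10 K)) ≠ 0 := by
    intro h
    rw [h, zero_mul] at kC
    exact (neg_ne_zero.mpr (one_ne_zero)) kC.symm
  apply mul_left_cancel₀ (mul_ne_zero hY hZ)
  linear_combination (∏ g ∈ F \ E, LoT.ratio (g⁻¹ • pt01 K)) *
      (∏ g ∈ E \ {g1, g2}, LoT.ratio (g⁻¹ • pt01 K)) * kA - kD -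
    (∏ g ∈ F \ E, LoT.ratio (g⁻¹ • pt10 K)) *
      (∏ g ∈ E \ {g3, g4}, LoT.ratio (g⁻¹ • pt10 K)) * kB + kC -
    (∏ g ∈ E \ {g1, g3}, LoT.ratio (g • pt10 K)) *
      (∏ g ∈ E \ {g1, g2}, LoT.ratio (g⁻¹ • pt01 K)) * eqT


end LoTAux

set_option maxHeartbeats 2000000

theorem lemma_of_tangents
    {K : Type*} [Field K] [Fintype K] (S : Set (PGL2 K)) (hS : SharplyTransitive S)
    (b1 c1 d1 a2 c2 d2 a3 b3 d3 a4 b4 c4 : K)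
    (M1 M2 M3 M4 : GL (Fin 2) K)
    (hM1 : (M1 : Matrix (Fin 2) (Fin 2) K) = !![0, b1; c1, d1])
    (hM2 : (M2 : Matrix (Fin 2) (Fin 2) K) = !![a2, 0; c2, d2])
    (hM3 : (M3 : Matrix (Fin 2) (Fin 2) K) = !![a3, b3; 0, d3])
    (hM4 : (M4 : Matrix (Fin 2) (Fin 2) K) = !![a4, b4; c4, 0])
    (h1 : PGL2.proj K M1 ∈ S) (h2 : PGL2.proj K M2 ∈ S)
    (h3 : PGL2.proj K M3 ∈ S) (h4 : PGL2.proj K M4 ∈ S) :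
    b1 * d2 * a3 * c4 = c1 * a2 * d3 * b4 := by
  classical
  -- nonzero entries coming from invertibility
  have hb1 : b1 ≠ 0 := by
    intro h; apply LoT.det_ne_zero M1; rw [hM1, Matrix.det_fin_two_of, h]; ring
  have hc1 : c1 ≠ 0 := by
    intro h; apply LoT.det_ne_zero M1; rw [hM1, Matrix.det_fin_two_of, h]; ring
  have ha2 : a2 ≠ 0 := by
    intro h; apply LoT.det_ne_zero M2; rw [hM2, Matrix.det_fin_two_of, h]; ring
  have hd2 : d2 ≠ 0 := by
    intro h; apply LoT.det_ne_zero M2; rw [hM2, Matrix.det_fin_two_of, h]; ring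
  have ha3 : a3 ≠ 0 := by
    intro h; apply LoT.det_ne_zero M3; rw [hM3, Matrix.det_fin_two_of, h]; ring
  have hd3 : d3 ≠ 0 := by
    intro h; apply LoT.det_ne_zero M3; rw [hM3, Matrix.det_fin_two_of, h]; ring
  have hb4 : b4 ≠ 0 := by
    intro h; apply LoT.det_ne_zero M4; rw [hM4, Matrix.det_fin_two_of, h]; ring
  have hc4 : c4 ≠ 0 := by
    intro h; apply LoT.det_ne_zero M4; rw [hM4, Matrix.det_fin_two_of, h]; ring
  -- basic action facts
  have hg1_10 : PGL2.proj K M1 • pt10 K = pt01 K :=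
    (LoT.smul_pt10_eq_pt01_iff M1).mpr (by rw [hM1]; simp)
  have hg3_10 : PGL2.proj K M3 • pt10 K = pt10 K :=
    (LoT.smul_pt10_eq_pt10_iff M3).mpr (by rw [hM3]; simp)
  have hg2_01 : PGL2.proj K M2 • pt01 K = pt01 K :=
    (LoT.smul_pt01_eq_pt01_iff M2).mpr (by rw [hM2]; simp)
  have hg4_01 : PGL2.proj K M4 • pt01 K = pt10 K :=
    (LoT.smul_pt01_eq_pt10_iff M4).mpr (by rw [hM4]; simp)
  -- ratio values
  have rA2 : LoT.ratio (PGL2.proj K M2 • pt10 K) = a2 * c2⁻¹ := by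
    rw [LoT.ratio_smul_pt10, hM2]; simp
  have rA4 : LoT.ratio (PGL2.proj K M4 • pt10 K) = a4 * c4⁻¹ := by
    rw [LoT.ratio_smul_pt10, hM4]; simp
  have rB1 : LoT.ratio (PGL2.proj K M1 • pt01 K) = b1 * d1⁻¹ := by
    rw [LoT.ratio_smul_pt01, hM1]; simp
  have rB3 : LoT.ratio (PGL2.proj K M3 • pt01 K) = b3 * d3⁻¹ := by
    rw [LoT.ratio_smul_pt01, hM3]; simp
  have rC1 : LoT.ratio ((PGL2.proj K M1)⁻¹ • pt10 K) = d1 * (-c1)⁻¹ := by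
    rw [LoT.ratio_inv_smul_pt10, hM1]; simp
  have rC2 : LoT.ratio ((PGL2.proj K M2)⁻¹ • pt10 K) = d2 * (-c2)⁻¹ := by
    rw [LoT.ratio_inv_smul_pt10, hM2]; simp
  have rD3 : LoT.ratio ((PGL2.proj K M3)⁻¹ • pt01 K) = -b3 * a3⁻¹ := by
    rw [LoT.ratio_inv_smul_pt01, hM3]; simp
  have rD4 : LoT.ratio ((PGL2.proj K M4)⁻¹ • pt01 K) = -b4 * a4⁻¹ := by
    rw [LoT.ratio_inv_smul_pt01, hM4]; simp
  -- entry characterizations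
  have i_d1 : PGL2.proj K M1 • pt01 K = pt10 K ↔ d1 = 0 := by
    rw [LoT.smul_pt01_eq_pt10_iff, hM1]; simp
  have i_a4 : PGL2.proj K M4 • pt10 K = pt01 K ↔ a4 = 0 := by
    rw [LoT.smul_pt10_eq_pt01_iff, hM4]; simp
  have i_b3 : PGL2.proj K M3 • pt01 K = pt01 K ↔ b3 = 0 := by
    rw [LoT.smul_pt01_eq_pt01_iff, hM3]; simp
  have i_c2 : PGL2.proj K M2 • pt10 K = pt10 K ↔ c2 = 0 := by
    rw [LoT.smul_pt10_eq_pt10_iff, hM2]; simp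
  have i_a2 : PGL2.proj K M2 • pt10 K = pt01 K ↔ a2 = 0 := by
    rw [LoT.smul_pt10_eq_pt01_iff, hM2]; simp
  have i_c1 : PGL2.proj K M1 • pt10 K = pt10 K ↔ c1 = 0 := by
    rw [LoT.smul_pt10_eq_pt10_iff, hM1]; simp
  have i_b4 : PGL2.proj K M4 • pt01 K = pt01 K ↔ b4 = 0 := by
    rw [LoT.smul_pt01_eq_pt01_iff, hM4]; simp
  have i_c4 : PGL2.proj K M4 • pt10 K = pt10 K ↔ c4 = 0 := by
    rw [LoT.smul_pt10_eq_pt10_iff, hM4]; simp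
  -- relations in the two degenerate situations
  have rel14 : PGL2.proj K M1 = PGL2.proj K M4 → b1 * c4 = c1 * b4 := by
    intro h
    have hd1 : d1 = 0 := i_d1.mp (by rw [h]; exact hg4_01)
    have ha4 : a4 = 0 := i_a4.mp (by rw [← h]; exact hg1_10)
    have hv : (![1, 1] : Fin 2 → K) ≠ 0 := fun hh => by simpa using congrFun hh 0
    have e : PGL2.proj K M1 • Projectivization.mk K ![1, 1] hv =
        PGL2.proj K M4 • Projectivization.mk K ![1, 1] hv := by rw [h]
    rw [LoT.proj_smul, LoT.proj_smul, gl_smul_mk, gl_smul_mk] at e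
    obtain ⟨t, ht⟩ := (Projectivization.mk_eq_mk_iff' ..).mp e
    have h0 := congrFun ht 0
    have h1' := congrFun ht 1
    simp [hM1, hM4, Matrix.mulVec, dotProduct, Fin.sum_univ_two, hd1, ha4] at h0 h1'
    linear_combination b4 * h1' - c4 * h0
  have rel23 : PGL2.proj K M2 = PGL2.proj K M3 → a2 * d3 = d2 * a3 := by
    intro h
    have hc2' : c2 = 0 := i_c2.mp (by rw [h]; exact hg3_10)
    have hb3' : b3 = 0 := i_b3.mp (by rw [← h]; exact hg2_01)
    have hv : (![1, 1] : Fin 2 → K) ≠ 0 := fun hh => by simpa using congrFun hh 0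
    have e : PGL2.proj K M2 • Projectivization.mk K ![1, 1] hv =
        PGL2.proj K M3 • Projectivization.mk K ![1, 1] hv := by rw [h]
    rw [LoT.proj_smul, LoT.proj_smul, gl_smul_mk, gl_smul_mk] at e
    obtain ⟨t, ht⟩ := (Projectivization.mk_eq_mk_iff' ..).mp e
    have h0 := congrFun ht 0
    have h1' := congrFun ht 1
    simp [hM2, hM3, Matrix.mulVec, dotProduct, Fin.sum_univ_two, hc2', hb3'] at h0 h1'
    linear_combination a3 * h1' - d3 * h0
  -- uniqueness helper
  have uniq : ∀ {x y : P1 K} {g h : PGL2 K}, g ∈ S → h ∈ S → g • x = y → h • x = y → g = h :=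
    fun hg hh e1 e2 => (hS _ _).unique ⟨hg, e1⟩ ⟨hh, e2⟩
  set gg1 := PGL2.proj K M1 with hgg1
  set gg2 := PGL2.proj K M2 with hgg2
  set gg3 := PGL2.proj K M3 with hgg3
  set gg4 := PGL2.proj K M4 with hgg4
  have hc1' : ∀ g, g ∈ S → g • pt10 K = pt01 K → g = gg1 := fun g hg e => uniq hg h1 e hg1_10
  have hc2' : ∀ g, g ∈ S → g • pt01 K = pt01 K → g = gg2 := fun g hg e => uniq hg h2 e hg2_01
  have hc3' : ∀ g, g ∈ S → g • pt10 K = pt10 K → g = gg3 := fun g hg e => uniq hg h3 e hg3_10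
  have hc4' : ∀ g, g ∈ S → g • pt01 K = pt10 K → g = gg4 := fun g hg e => uniq hg h4 e hg4_01
  -- degeneracy characterizations
  have deg14 : d1 = 0 → gg1 = gg4 := fun h => hc4' gg1 h1 (i_d1.mpr h)
  have deg14' : a4 = 0 → gg1 = gg4 := fun h => (hc1' gg4 h4 (i_a4.mpr h)).symm
  have deg23 : c2 = 0 → gg2 = gg3 := fun h => hc3' gg2 h2 (i_c2.mpr h)
  have deg23' : b3 = 0 → gg2 = gg3 := fun h => (hc2' gg3 h3 (i_b3.mpr h)).symm
  -- distinctness facts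
  have n12 : gg1 ≠ gg2 := fun h => ha2 (i_a2.mp (by rw [← h]; exact hg1_10))
  have n13 : gg1 ≠ gg3 := fun h => hc1 (i_c1.mp (by rw [h]; exact hg3_10))
  have n24 : gg2 ≠ gg4 := fun h => hb4 (i_b4.mp (by rw [← h]; exact hg2_01))
  have n34 : gg3 ≠ gg4 := fun h => hc4 (i_c4.mp (by rw [← h]; exact hg3_10))
  have star := LoT.master S hS gg1 gg2 gg3 gg4 h1 h2 h3 h4 hg1_10 hg2_01 hg3_10 hg4_01
  by_cases c14 : gg1 = gg4
  · by_cases c23 : gg2 = gg3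
    · have r1 := rel14 c14
      have r2 := rel23 c23
      linear_combination d2 * a3 * r1 - c1 * b4 * r2
    · -- g1 = g4, g2 ≠ g3
      have r1 := rel14 c14
      have hc2n : c2 ≠ 0 := fun h => c23 (deg23 h)
      have hb3n : b3 ≠ 0 := fun h => c23 (deg23' h)
      have sA : ({gg1, gg2, gg3, gg4} : Finset (PGL2 K)) \ {gg1, gg3} = {gg2} := by
        ext g
        simp only [Finset.mem_sdiff, Finset.mem_insert, Finset.mem_singleton]
        constructor
        · rintro ⟨(rfl | rfl | rfl | rfl), hn⟩ <;> push_neg at hn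
          · exact absurd rfl hn.1
          · rfl
          · exact absurd rfl hn.2
          · exact absurd c14.symm hn.1
        · rintro rfl
          refine ⟨Or.inr (Or.inl rfl), ?_⟩
          push_neg
          exact ⟨fun h => n12 h.symm, c23⟩
      have sD : ({gg1, gg2, gg3, gg4} : Finset (PGL2 K)) \ {gg1, gg2} = {gg3} := by
        ext g
        simp only [Finset.mem_sdiff, Finset.mem_insert, Finset.mem_singleton]
        constructor
        · rintro ⟨(rfl | rfl | rfl | rfl), hn⟩ <;> push_neg at hn
          · exact absurd rfl hn.1
          · exact absurd rfl hn.2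
          · rfl
          · exact absurd c14.symm hn.1
        · rintro rfl
          refine ⟨Or.inr (Or.inr (Or.inl rfl)), ?_⟩
          push_neg
          exact ⟨fun h => n13 h.symm, fun h => c23 h.symm⟩
      have sB : ({gg1, gg2, gg3, gg4} : Finset (PGL2 K)) \ {gg2, gg4} = {gg3} := by
        ext g
        simp only [Finset.mem_sdiff, Finset.mem_insert, Finset.mem_singleton]
        constructor
        · rintro ⟨(rfl | rfl | rfl | rfl), hn⟩ <;> push_neg at hn
          · exact absurd c14 hn.2
          · exact absurd rfl hn.1
          · rfl
          · exact absurd rfl hn.2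
        · rintro rfl
          refine ⟨Or.inr (Or.inr (Or.inl rfl)), ?_⟩
          push_neg
          exact ⟨fun h => c23 h.symm, n34⟩
      have sC : ({gg1, gg2, gg3, gg4} : Finset (PGL2 K)) \ {gg3, gg4} = {gg2} := by
        ext g
        simp only [Finset.mem_sdiff, Finset.mem_insert, Finset.mem_singleton]
        constructor
        · rintro ⟨(rfl | rfl | rfl | rfl), hn⟩ <;> push_neg at hn
          · exact absurd c14 hn.2
          · rfl
          · exact absurd rfl hn.1
          · exact absurd rfl hn.2
        · rintro rfl
          refine ⟨Or.inr (Or.inl rfl), ?_⟩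
          push_neg
          exact ⟨c23, n24⟩
      rw [sA, sD, sB, sC, Finset.prod_singleton, Finset.prod_singleton,
        Finset.prod_singleton, Finset.prod_singleton, rA2, rD3, rB3, rC2] at star
      field_simp at star
      have h' : (b3 * c2) * (a2 * d3) = (b3 * c2) * (d2 * a3) := by linear_combination (-(b3 * c2)) * star
      have key := mul_left_cancel₀ (mul_ne_zero hb3n hc2n) h'
      linear_combination d2 * a3 * r1 - c1 * b4 * key
  · by_cases c23 : gg2 = gg3
    · -- g1 ≠ g4, g2 = g3
      have r2 := rel23 c23
      have hd1n : d1 ≠ 0 := fun h => c14 (deg14 h)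
      have ha4n : a4 ≠ 0 := fun h => c14 (deg14' h)
      have sA : ({gg1, gg2, gg3, gg4} : Finset (PGL2 K)) \ {gg1, gg3} = {gg4} := by
        ext g
        simp only [Finset.mem_sdiff, Finset.mem_insert, Finset.mem_singleton]
        constructor
        · rintro ⟨(rfl | rfl | rfl | rfl), hn⟩ <;> push_neg at hn
          · exact absurd rfl hn.1
          · exact absurd c23 hn.2
          · exact absurd rfl hn.2
          · rfl
        · rintro rfl
          refine ⟨Or.inr (Or.inr (Or.inr rfl)), ?_⟩
          push_neg
          exact ⟨fun h => c14 h.symm, fun h => n34 h.symm⟩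
      have sD : ({gg1, gg2, gg3, gg4} : Finset (PGL2 K)) \ {gg1, gg2} = {gg4} := by
        ext g
        simp only [Finset.mem_sdiff, Finset.mem_insert, Finset.mem_singleton]
        constructor
        · rintro ⟨(rfl | rfl | rfl | rfl), hn⟩ <;> push_neg at hn
          · exact absurd rfl hn.1
          · exact absurd rfl hn.2
          · exact absurd c23.symm hn.2
          · rfl
        · rintro rfl
          refine ⟨Or.inr (Or.inr (Or.inr rfl)), ?_⟩
          push_neg
          exact ⟨fun h => c14 h.symm, fun h => n24 h.symm⟩
      have sB : ({gg1, gg2, gg3, gg4} : Finset (PGL2 K)) \ {gg2, gg4} = {gg1} := by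
        ext g
        simp only [Finset.mem_sdiff, Finset.mem_insert, Finset.mem_singleton]
        constructor
        · rintro ⟨(rfl | rfl | rfl | rfl), hn⟩ <;> push_neg at hn
          · rfl
          · exact absurd rfl hn.1
          · exact absurd c23.symm hn.1
          · exact absurd rfl hn.2
        · rintro rfl
          refine ⟨Or.inl rfl, ?_⟩
          push_neg
          exact ⟨n12, c14⟩
      have sC : ({gg1, gg2, gg3, gg4} : Finset (PGL2 K)) \ {gg3, gg4} = {gg1} := by
        ext g
        simp only [Finset.mem_sdiff, Finset.mem_insert, Finset.mem_singleton]
        constructor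
        · rintro ⟨(rfl | rfl | rfl | rfl), hn⟩ <;> push_neg at hn
          · rfl
          · exact absurd c23 hn.1
          · exact absurd rfl hn.1
          · exact absurd rfl hn.2
        · rintro rfl
          refine ⟨Or.inl rfl, ?_⟩
          push_neg
          exact ⟨n13, c14⟩
      rw [sA, sD, sB, sC, Finset.prod_singleton, Finset.prod_singleton,
        Finset.prod_singleton, Finset.prod_singleton, rA4, rD4, rB1, rC1] at star
      field_simp at star
      have h' : a4 * (b1 * c4) = a4 * (c1 * b4) := by linear_combination a4 * star
      have key := mul_left_cancel₀ ha4n h'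
      linear_combination d2 * a3 * key - c1 * b4 * r2
    · -- nondegenerate case
      have hd1n : d1 ≠ 0 := fun h => c14 (deg14 h)
      have ha4n : a4 ≠ 0 := fun h => c14 (deg14' h)
      have hc2n : c2 ≠ 0 := fun h => c23 (deg23 h)
      have hb3n : b3 ≠ 0 := fun h => c23 (deg23' h)
      have sA : ({gg1, gg2, gg3, gg4} : Finset (PGL2 K)) \ {gg1, gg3} = {gg2, gg4} := by
        ext g
        simp only [Finset.mem_sdiff, Finset.mem_insert, Finset.mem_singleton]
        constructor
        · rintro ⟨(rfl | rfl | rfl | rfl), hn⟩ <;> push_neg at hn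
          · exact absurd rfl hn.1
          · exact Or.inl rfl
          · exact absurd rfl hn.2
          · exact Or.inr rfl
        · rintro (rfl | rfl)
          · refine ⟨Or.inr (Or.inl rfl), ?_⟩
            push_neg
            exact ⟨fun h => n12 h.symm, c23⟩
          · refine ⟨Or.inr (Or.inr (Or.inr rfl)), ?_⟩
            push_neg
            exact ⟨fun h => c14 h.symm, fun h => n34 h.symm⟩
      have sD : ({gg1, gg2, gg3, gg4} : Finset (PGL2 K)) \ {gg1, gg2} = {gg3, gg4} := by
        ext g
        simp only [Finset.mem_sdiff, Finset.mem_insert, Finset.mem_singleton]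
        constructor
        · rintro ⟨(rfl | rfl | rfl | rfl), hn⟩ <;> push_neg at hn
          · exact absurd rfl hn.1
          · exact absurd rfl hn.2
          · exact Or.inl rfl
          · exact Or.inr rfl
        · rintro (rfl | rfl)
          · refine ⟨Or.inr (Or.inr (Or.inl rfl)), ?_⟩
            push_neg
            exact ⟨fun h => n13 h.symm, fun h => c23 h.symm⟩
          · refine ⟨Or.inr (Or.inr (Or.inr rfl)), ?_⟩
            push_neg
            exact ⟨fun h => c14 h.symm, fun h => n24 h.symm⟩
      have sB : ({gg1, gg2, gg3, gg4} : Finset (PGL2 K)) \ {gg2, gg4} = {gg1, gg3} := by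
        ext g
        simp only [Finset.mem_sdiff, Finset.mem_insert, Finset.mem_singleton]
        constructor
        · rintro ⟨(rfl | rfl | rfl | rfl), hn⟩ <;> push_neg at hn
          · exact Or.inl rfl
          · exact absurd rfl hn.1
          · exact Or.inr rfl
          · exact absurd rfl hn.2
        · rintro (rfl | rfl)
          · refine ⟨Or.inl rfl, ?_⟩
            push_neg
            exact ⟨n12, c14⟩
          · refine ⟨Or.inr (Or.inr (Or.inl rfl)), ?_⟩
            push_neg
            exact ⟨fun h => c23 h.symm, n34⟩
      have sC : ({gg1, gg2, gg3, gg4} : Finset (PGL2 K)) \ {gg3, gg4} = {gg1, gg2} := by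
        ext g
        simp only [Finset.mem_sdiff, Finset.mem_insert, Finset.mem_singleton]
        constructor
        · rintro ⟨(rfl | rfl | rfl | rfl), hn⟩ <;> push_neg at hn
          · exact Or.inl rfl
          · exact Or.inr rfl
          · exact absurd rfl hn.1
          · exact absurd rfl hn.2
        · rintro (rfl | rfl)
          · refine ⟨Or.inl rfl, ?_⟩
            push_neg
            exact ⟨n13, c14⟩
          · refine ⟨Or.inr (Or.inl rfl), ?_⟩
            push_neg
            exact ⟨c23, n24⟩
      rw [sA, sD, sB, sC, Finset.prod_pair n24, Finset.prod_pair n34,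
        Finset.prod_pair n13, Finset.prod_pair n12, rA2, rA4, rD3, rD4,
        rB1, rB3, rC1, rC2] at star
      field_simp at star
      have h' : (b3 * d1 * c2 * a4) * (a2 * b4 * (d3 * c1)) =
          (b3 * d1 * c2 * a4) * (b1 * d2 * (c4 * a3)) := by linear_combination (b3 * d1 * c2 * a4) * star
      have key := mul_left_cancel₀
        (mul_ne_zero (mul_ne_zero (mul_ne_zero hb3n hd1n) hc2n) ha4n) h'
      linear_combination (-1 : K) * key

end
end

section
/- Let K be a finite field and let S be a sharply transitive subset of PGL(2,K) on P^1(K) containing the identity. Then for all g, h ∈ S, the product g h lies in S (i.e., S is closed under multiplication). -/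
open Matrix Projectivization

noncomputable section

variable {K : Type*} [Field K]

namespace STAux

open MvPolynomial

section PolyBasic

variable {R : Type*} [CommRing R]

def dd (i j : ℕ) : Fin 2 →₀ ℕ := Finsupp.single 0 i + Finsupp.single 1 j

lemma dd_apply_zero (i j : ℕ) : dd i j 0 = i := by
  simp [dd, Finsupp.single_apply]

lemma dd_apply_one (i j : ℕ) : dd i j 1 = j := by
  simp [dd, Finsupp.single_apply]

lemma degree_fin2 (d : Fin 2 →₀ ℕ) : d.degree = d 0 + d 1 := by
  rw [Finsupp.degree, ← Fin.sum_univ_two (f := fun i => d i)]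
  exact Finset.sum_subset (Finset.subset_univ _)
    (fun i _ hi => Finsupp.notMem_support_iff.mp hi)

lemma dd_degree (i j : ℕ) : (dd i j).degree = i + j := by
  rw [degree_fin2, dd_apply_zero, dd_apply_one]

lemma eq_dd_of_degree (d : Fin 2 →₀ ℕ) : d = dd (d 0) (d 1) := by
  ext i
  fin_cases i
  · exact (dd_apply_zero _ _).symm
  · exact (dd_apply_one _ _).symm

/-- The Moore form `X0^q X1 - X0 X1^q`. -/
def PP (q : ℕ) : MvPolynomial (Fin 2) R := X 0 ^ q * X 1 - X 0 * X 1 ^ q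

lemma X_pow_mul_X_pow_eq (i j : ℕ) :
    (X 0 ^ i * X 1 ^ j : MvPolynomial (Fin 2) R) = monomial (dd i j) 1 := by
  rw [X_pow_eq_monomial, X_pow_eq_monomial, monomial_mul, one_mul]
  rfl

lemma PP_eq (q : ℕ) :
    (PP q : MvPolynomial (Fin 2) R) = monomial (dd q 1) 1 - monomial (dd 1 q) 1 := by
  rw [PP, ← X_pow_mul_X_pow_eq, ← X_pow_mul_X_pow_eq, pow_one, pow_one]

lemma dd_q1_ne_dd_1q {q : ℕ} (hq : q ≠ 1) : dd q 1 ≠ dd 1 q := by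
  intro h
  have h0 : dd q 1 0 = dd 1 q 0 := by rw [h]
  rw [dd_apply_zero, dd_apply_zero] at h0
  exact hq h0

lemma coeff_PP (q : ℕ) (d : Fin 2 →₀ ℕ) :
    coeff d (PP q : MvPolynomial (Fin 2) R)
      = (if d = dd q 1 then 1 else 0) - (if d = dd 1 q then 1 else 0) := by
  rw [PP_eq]
  simp [coeff_monomial, eq_comm]

lemma PP_isHomogeneous (q : ℕ) : (PP q : MvPolynomial (Fin 2) R).IsHomogeneous (q + 1) := by
  rw [PP_eq]
  exact (isHomogeneous_monomial _ (by rw [dd_degree])).sub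
    (isHomogeneous_monomial _ (by rw [dd_degree, add_comm]))

end PolyBasic

section FieldLemmas

variable {K : Type*} [Field K] [Fintype K]

lemma prod_pow_dd (x : Fin 2 → K) (i j : ℕ) :
    ((dd i j).prod fun k e => x k ^ e) = x 0 ^ i * x 1 ^ j := by
  rw [Finsupp.prod_fintype _ _ (fun k => pow_zero (x k)), Fin.prod_univ_two,
    dd_apply_zero, dd_apply_one]

lemma rep_homog (f : MvPolynomial (Fin 2) K) {N : ℕ} (hf : f.IsHomogeneous N) :
    f = ∑ i ∈ Finset.range (N + 1), monomial (dd i (N - i)) (coeff (dd i (N - i)) f) := by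
  apply MvPolynomial.ext
  intro d
  rw [coeff_sum]
  simp only [coeff_monomial]
  by_cases hd : d.degree = N
  · have h0 : d 0 + d 1 = N := by rw [← degree_fin2, hd]
    have hkey : dd (d 0) (N - d 0) = d := by
      have hN : N - d 0 = d 1 := by omega
      rw [hN]
      exact (eq_dd_of_degree d).symm
    rw [Finset.sum_eq_single (d 0)]
    · rw [if_pos hkey, hkey]
    · intro i _ hne
      rw [if_neg]
      intro hcon
      apply hne
      rw [← dd_apply_zero i (N - i), hcon]
    · intro hmem
      exact absurd (Finset.mem_range.mpr (by omega)) hmem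
  · rw [hf.coeff_eq_zero hd]
    symm
    apply Finset.sum_eq_zero
    intro i hi
    rw [if_neg]
    intro hcon
    apply hd
    rw [← hcon, dd_degree]
    have := Finset.mem_range.mp hi
    omega

lemma homog_eval_zero (f : MvPolynomial (Fin 2) K)
    (hf : f.IsHomogeneous (Fintype.card K + 1))
    (hv : ∀ x : Fin 2 → K, eval x f = 0) :
    ∃ γ : K, f = C γ * PP (Fintype.card K) := by
  have hq2 : 2 ≤ Fintype.card K := Fintype.one_lt_card
  set q := Fintype.card K with hqdef
  set N := q + 1 with hN
  set a : ℕ → K := fun i => coeff (dd i (N - i)) f with ha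
  have hrep := rep_homog f hf
  have hevalmon : ∀ (x : Fin 2 → K) (i : ℕ),
      eval x (monomial (dd i (N - i)) (a i)) = a i * (x 0 ^ i * x 1 ^ (N - i)) := by
    intro x i
    rw [eval_monomial, prod_pow_dd]
  have heval : ∀ c : K, ∑ i ∈ Finset.range (N + 1), a i * c ^ i = 0 := by
    intro c
    have h := hv ![c, 1]
    rw [hrep, map_sum] at h
    rw [← h]
    apply Finset.sum_congr rfl
    intro i _
    rw [hevalmon]
    simp
  have htop : a N = 0 := by
    have h := hv ![1, 0]
    rw [hrep, map_sum] at h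
    rw [← h]
    rw [Finset.sum_eq_single N]
    · rw [hevalmon]
      simp
    · intro i hi hne
      rw [hevalmon]
      have : (0:K) ^ (N - i) = 0 := by
        apply zero_pow
        have := Finset.mem_range.mp hi
        omega
      simp [this]
    · intro hmem
      exact absurd (Finset.mem_range.mpr (by omega)) hmem
  set pq : Polynomial K :=
    ∑ i ∈ Finset.range q, Polynomial.C (a i + if i = 1 then a q else 0) * Polynomial.X ^ i
    with hpq
  have heval2 : ∀ c : K, pq.eval c = 0 := by
    intro c
    rw [hpq, Polynomial.eval_finset_sum]
    simp only [Polynomial.eval_mul, Polynomial.eval_C, Polynomial.eval_pow, Polynomial.eval_X,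
      add_mul]
    rw [Finset.sum_add_distrib]
    have h2 : ∑ i ∈ Finset.range q, (if i = 1 then a q else 0) * c ^ i = a q * c := by
      rw [Finset.sum_eq_single 1]
      · simp
      · intro i _ hne
        simp [hne]
      · intro hmem
        exact absurd (Finset.mem_range.mpr (by omega)) hmem
    rw [h2]
    have h3 := heval c
    rw [hN] at h3
    rw [Finset.sum_range_succ, Finset.sum_range_succ] at h3
    -- h3 : ∑ i in range q, a i * c^i + a q * c^q + a (q+1) * c^(q+1) = 0
    have h4 : a (q + 1) = 0 := htop
    have h5 : c ^ q = c := FiniteField.pow_card c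
    rw [h4, h5] at h3
    linear_combination h3
  have hdeg : pq.natDegree < q := by
    have hle : pq.natDegree ≤ q - 1 := by
      rw [hpq]
      apply Polynomial.natDegree_sum_le_of_forall_le
      intro i hi
      apply le_trans (Polynomial.natDegree_mul_le)
      rw [Polynomial.natDegree_C, Polynomial.natDegree_X_pow]
      have := Finset.mem_range.mp hi
      omega
    omega
  have hpq0 : pq = 0 := by
    apply Polynomial.eq_zero_of_natDegree_lt_card_of_eval_eq_zero pq
      (Function.injective_id (α := K))
    · intro i
      exact heval2 i
    · simpa using hdeg
  have hco : ∀ i, i < q → a i + (if i = 1 then a q else 0) = 0 := by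
    intro i hi
    have h := congrArg (Polynomial.coeff · i) hpq0
    simp only [hpq] at h
    rw [Polynomial.finset_sum_coeff] at h
    simp only [Polynomial.coeff_C_mul, Polynomial.coeff_X_pow, Polynomial.coeff_zero] at h
    rw [Finset.sum_eq_single i] at h
    · simpa using h
    · intro j _ hne
      rw [if_neg (Ne.symm hne), mul_zero]
    · intro hmem
      exact absurd (Finset.mem_range.mpr hi) hmem
  refine ⟨a q, ?_⟩
  have e1 : N - 1 = q := by omega
  have e2 : N - q = 1 := by omega
  have ha1 : coeff (dd 1 q) f = - a q := by
    have h' := hco 1 (by omega)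
    rw [if_pos rfl] at h'
    have h'' : a 1 = - a q := eq_neg_of_add_eq_zero_left h'
    rw [ha] at h''
    simpa [e1] using h''
  have ha2 : a q = coeff (dd q 1) f := by
    rw [ha]
    simp [e2]
  rw [hrep, PP_eq]
  have hsub : ({1, q} : Finset ℕ) ⊆ Finset.range (N + 1) := by
    intro i hi
    rcases Finset.mem_insert.mp hi with h | h
    · subst h; exact Finset.mem_range.mpr (by omega)
    · rw [Finset.mem_singleton] at h; subst h; exact Finset.mem_range.mpr (by omega)
  have hzero : ∀ i ∈ Finset.range (N + 1), i ∉ ({1, q} : Finset ℕ) →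
      monomial (dd i (N - i)) (coeff (dd i (N - i)) f) = 0 := by
    intro i hi hnotin
    have hiN : i < N + 1 := Finset.mem_range.mp hi
    have hne1 : i ≠ 1 := fun h => hnotin (by rw [h]; exact Finset.mem_insert_self _ _)
    have hneq : i ≠ q := fun h =>
      hnotin (by rw [h]; exact Finset.mem_insert.mpr (Or.inr (Finset.mem_singleton_self _)))
    have hz : coeff (dd i (N - i)) f = 0 := by
      rcases lt_or_ge i q with h | h
      · have h' := hco i h
        rw [if_neg hne1, add_zero] at h'
        rw [ha] at h'
        simpa using h'
      · have hiN' : i = N := by omega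
        rw [hiN']
        exact htop
    rw [hz, monomial_zero]
  rw [← Finset.sum_subset hsub hzero]
  rw [Finset.sum_pair (by omega : (1:ℕ) ≠ q), e1, e2, ha1, ← ha2]
  rw [mul_sub, C_mul_monomial, C_mul_monomial, mul_one]
  rw [map_neg]
  abel

end FieldLemmas

section Phi

variable {K : Type*} [Field K] [Fintype K]

/-- Substitution `X_j ↦ Σ_k M j k X_k`. -/
def subM (M : Matrix (Fin 2) (Fin 2) K) :
    MvPolynomial (Fin 2) K →ₐ[K] MvPolynomial (Fin 2) K :=
  aeval (fun j => C (M j 0) * X 0 + C (M j 1) * X 1)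

lemma subM_X (M : Matrix (Fin 2) (Fin 2) K) (j : Fin 2) :
    subM M (X j) = C (M j 0) * X 0 + C (M j 1) * X 1 :=
  aeval_X _ _

lemma subM_C (M : Matrix (Fin 2) (Fin 2) K) (c : K) : subM M (C c) = C c := by
  rw [subM, aeval_C, algebraMap_eq]

lemma subM_one (u : MvPolynomial (Fin 2) K) : subM 1 u = u := by
  have h : subM (1 : Matrix (Fin 2) (Fin 2) K) = AlgHom.id K _ := by
    apply algHom_ext
    intro j
    rw [subM_X, AlgHom.id_apply]
    fin_cases j <;> simp [Matrix.one_apply]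
  rw [h, AlgHom.id_apply]

lemma subM_subM (A B : Matrix (Fin 2) (Fin 2) K) (u : MvPolynomial (Fin 2) K) :
    subM B (subM A u) = subM (A * B) u := by
  have h : (subM B).comp (subM A) = subM (A * B) := by
    apply algHom_ext
    intro j
    simp only [AlgHom.comp_apply, subM_X, _root_.map_add, _root_.map_mul, subM_C,
      Matrix.mul_apply, Fin.sum_univ_two, C_add, C_mul]
    ring
  calc subM B (subM A u) = ((subM B).comp (subM A)) u := rfl
  _ = subM (A * B) u := by rw [h]

lemma C_X_linear_pow_card (α β : K) :
    (C α * X 0 + C β * X 1 : MvPolynomial (Fin 2) K) ^ (Fintype.card K)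
      = C α * X 0 ^ (Fintype.card K) + C β * X 1 ^ (Fintype.card K) := by
  obtain ⟨p, hC⟩ := CharP.exists K
  haveI : CharP K p := hC
  obtain ⟨n, hp, hcard⟩ := FiniteField.card K p
  haveI : Fact p.Prime := ⟨hp⟩
  rw [hcard, add_pow_char_pow, mul_pow, mul_pow, ← C_pow, ← C_pow, ← hcard,
    FiniteField.pow_card, FiniteField.pow_card]

lemma subM_PP (M : Matrix (Fin 2) (Fin 2) K) :
    subM M (PP (Fintype.card K)) = C M.det * PP (Fintype.card K) := by
  rw [PP, _root_.map_sub, _root_.map_mul, _root_.map_mul, _root_.map_pow, _root_.map_pow, subM_X, subM_X]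
  rw [C_X_linear_pow_card, C_X_linear_pow_card]
  rw [Matrix.det_fin_two, _root_.map_sub, _root_.map_mul, _root_.map_mul]
  ring

/-- The bilinear "graph" form of a matrix, as element of `K[Y][X]`. -/
def Lm (M : Matrix (Fin 2) (Fin 2) K) :
    MvPolynomial (Fin 2) (MvPolynomial (Fin 2) K) :=
  C (C (M 1 0) * X 0 - C (M 0 0) * X 1) * X 0 +
    C (C (M 1 1) * X 0 - C (M 0 1) * X 1) * X 1

/-- Substitute `Y := M X` (coefficients) and keep the outer `X` variables. -/
def phiM (M : Matrix (Fin 2) (Fin 2) K) :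
    MvPolynomial (Fin 2) (MvPolynomial (Fin 2) K) →+* MvPolynomial (Fin 2) K :=
  eval₂Hom (subM M).toRingHom X

lemma phiM_C (M : Matrix (Fin 2) (Fin 2) K) (u : MvPolynomial (Fin 2) K) :
    phiM M (C u) = subM M u :=
  eval₂_C _ _ _

lemma phiM_X (M : Matrix (Fin 2) (Fin 2) K) (i : Fin 2) : phiM M (X i) = X i :=
  eval₂_X _ _ _

lemma phiM_Lm (M M' : Matrix (Fin 2) (Fin 2) K) :
    phiM M (Lm M') =
      (C (M 0 0) * X 0 + C (M 0 1) * X 1) * (C (M' 1 0) * X 0 + C (M' 1 1) * X 1)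
        - (C (M 1 0) * X 0 + C (M 1 1) * X 1) * (C (M' 0 0) * X 0 + C (M' 0 1) * X 1) := by
  simp only [Lm, _root_.map_add, _root_.map_mul, phiM_C, phiM_X, _root_.map_sub, subM_X, subM_C]
  ring

lemma phiM_Lm_smul (M M' : Matrix (Fin 2) (Fin 2) K) (lam : K) (h : M' = lam • M) :
    phiM M (Lm M') = 0 := by
  rw [phiM_Lm, h]
  simp only [Matrix.smul_apply, smul_eq_mul, _root_.map_mul]
  ring

lemma phiM_map_C (M : Matrix (Fin 2) (Fin 2) K) (b : MvPolynomial (Fin 2) K) :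
    phiM M (MvPolynomial.map (C : K →+* MvPolynomial (Fin 2) K) b) = b := by
  have hco : (subM M).toRingHom.comp (C : K →+* MvPolynomial (Fin 2) K) = C := by
    apply RingHom.ext
    intro c
    exact subM_C M c
  rw [phiM]
  simp only [coe_eval₂Hom]
  rw [eval₂_map, hco, eval₂_eta]

lemma factor_zero_prop (Mv M'v : Matrix (Fin 2) (Fin 2) K)
    (hM : IsUnit Mv.det) (hM' : IsUnit M'v.det)
    (h : phiM Mv (Lm M'v) = 0) :
    ∃ lam : K, lam ≠ 0 ∧ Mv = lam • M'v := by
  rw [phiM_Lm] at h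
  have e1 := congrArg (eval ![(1:K), 0]) h
  have e2 := congrArg (eval ![(0:K), 1]) h
  have e3 := congrArg (eval ![(1:K), 1]) h
  simp only [_root_.map_sub, _root_.map_add, _root_.map_mul, eval_C, eval_X, map_zero,
    Matrix.cons_val_zero, Matrix.cons_val_one, Matrix.head_cons, mul_one, mul_zero,
    add_zero, zero_add] at e1 e2 e3
  set μ := M'v 1 1 * Mv 0 0 - M'v 0 1 * Mv 1 0 with hmu
  have hadj : M'v.adjugate * Mv = μ • 1 := by
    ext i j
    fin_cases i <;> fin_cases j <;>
      (simp [Matrix.adjugate_fin_two, Matrix.mul_apply, Fin.sum_univ_two, Matrix.one_apply]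
       try first
        | linear_combination hmu
        | linear_combination -hmu
        | linear_combination e1
        | linear_combination -e1
        | linear_combination e2
        | linear_combination -e2
        | linear_combination e3 - e1 - e2
        | linear_combination -e3 + e1 + e2
        | linear_combination hmu + e3 - e1 - e2
        | linear_combination -hmu - e3 + e1 + e2
        | linear_combination hmu - e3 + e1 + e2
        | linear_combination -hmu + e3 - e1 - e2)
  have hdetpow : μ ^ 2 = M'v.det * Mv.det := by
    have hdet : (M'v.adjugate * Mv).det = μ ^ 2 := by
      rw [hadj]
      simp [Matrix.det_smul]
    rw [Matrix.det_mul, Matrix.det_adjugate] at hdet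
    simpa using hdet.symm
  have hmune : μ ≠ 0 := by
    intro h0
    have : M'v.det * Mv.det ≠ 0 := mul_ne_zero hM'.ne_zero hM.ne_zero
    rw [← hdetpow, h0] at this
    simp at this
  have hdet0 : M'v.det ≠ 0 := hM'.ne_zero
  have hkey : M'v.det • Mv = μ • M'v := by
    have h1 : M'v * (M'v.adjugate * Mv) = M'v * (μ • 1) := by rw [hadj]
    rw [← Matrix.mul_assoc, Matrix.mul_adjugate] at h1
    rw [Matrix.smul_mul, Matrix.one_mul] at h1
    rw [h1, Matrix.mul_smul, Matrix.mul_one]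
  refine ⟨μ * (M'v.det)⁻¹, mul_ne_zero hmune (inv_ne_zero hdet0), ?_⟩
  calc Mv = (M'v.det)⁻¹ • (M'v.det • Mv) := by
        rw [smul_smul, inv_mul_cancel₀ hdet0, one_smul]
  _ = (M'v.det)⁻¹ • (μ • M'v) := by rw [hkey]
  _ = (μ * M'v.det⁻¹) • M'v := by rw [smul_smul, mul_comm]

lemma center_eq_scalar (g : GL (Fin 2) K) (hg : g ∈ Subgroup.center (GL (Fin 2) K)) :
    ∃ lam : K, lam ≠ 0 ∧ (↑g : Matrix (Fin 2) (Fin 2) K) = lam • 1 := by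
  have hcomm : ∀ B : GL (Fin 2) K, B * g = g * B := fun B => Subgroup.mem_center_iff.mp hg B
  have key : ∀ M : Matrix (Fin 2) (Fin 2) K, M.det ≠ 0 →
      M * (↑g : Matrix (Fin 2) (Fin 2) K) = (↑g : Matrix (Fin 2) (Fin 2) K) * M := by
    intro M hM
    exact congrArg Units.val (hcomm (Matrix.GeneralLinearGroup.mkOfDetNeZero M hM))
  have h1 : !![(1:K),1;0,1] * (↑g : Matrix (Fin 2) (Fin 2) K)
      = (↑g : Matrix (Fin 2) (Fin 2) K) * !![(1:K),1;0,1] :=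
    key _ (by simp [Matrix.det_fin_two_of])
  have h2 : !![(1:K),0;1,1] * (↑g : Matrix (Fin 2) (Fin 2) K)
      = (↑g : Matrix (Fin 2) (Fin 2) K) * !![(1:K),0;1,1] :=
    key _ (by simp [Matrix.det_fin_two_of])
  have e1 := fun i j => congrFun (congrFun h1 i) j
  have e2 := fun i j => congrFun (congrFun h2 i) j
  have hc : (↑g : Matrix (Fin 2) (Fin 2) K) 1 0 = 0 := by
    have := e1 0 0
    simp [Matrix.mul_apply, Fin.sum_univ_two] at this
    linear_combination this
  have hb : (↑g : Matrix (Fin 2) (Fin 2) K) 0 1 = 0 := by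
    have := e2 1 1
    simp [Matrix.mul_apply, Fin.sum_univ_two] at this
    linear_combination this
  have had : (↑g : Matrix (Fin 2) (Fin 2) K) 0 0 = (↑g : Matrix (Fin 2) (Fin 2) K) 1 1 := by
    have := e1 0 1
    simp [Matrix.mul_apply, Fin.sum_univ_two] at this
    linear_combination -this
  refine ⟨(↑g : Matrix (Fin 2) (Fin 2) K) 0 0, ?_, ?_⟩
  · have hdet : IsUnit (↑g : Matrix (Fin 2) (Fin 2) K).det :=
      (Matrix.isUnit_iff_isUnit_det _).mp g.isUnit
    intro h0
    rw [Matrix.det_fin_two, hc, hb, ← had, h0] at hdet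
    simp at hdet
  · ext i j
    fin_cases i <;> fin_cases j <;>
      simp [Matrix.one_apply, hc, hb, ← had, Matrix.smul_apply]

lemma central_scalar_mem (lam : K) (hlam : lam ≠ 0) :
    ∃ c : GL (Fin 2) K, (↑c : Matrix (Fin 2) (Fin 2) K) = lam • 1 ∧
      c ∈ Subgroup.center (GL (Fin 2) K) := by
  have hdet : (lam • (1 : Matrix (Fin 2) (Fin 2) K)).det ≠ 0 := by
    rw [Matrix.det_smul]
    simp [hlam]
  refine ⟨Matrix.GeneralLinearGroup.mkOfDetNeZero _ hdet, rfl, ?_⟩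
  apply Subgroup.mem_center_iff.mpr
  intro g
  apply Units.ext
  show (↑g : Matrix (Fin 2) (Fin 2) K) * (lam • 1) = (lam • 1) * (↑g : Matrix (Fin 2) (Fin 2) K)
  rw [Matrix.mul_smul, Matrix.smul_mul, Matrix.mul_one, Matrix.one_mul]

lemma mk_eq_of_smul_eq (A B : GL (Fin 2) K) (lam : K) (hlam : lam ≠ 0)
    (h : (↑A : Matrix (Fin 2) (Fin 2) K) = lam • (↑B : Matrix (Fin 2) (Fin 2) K)) :
    (QuotientGroup.mk A : PGL2 K) = QuotientGroup.mk B := by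
  obtain ⟨c, hc, hcen⟩ := central_scalar_mem lam hlam
  have hA : A = B * c := by
    apply Units.ext
    rw [Units.val_mul, hc, Matrix.mul_smul, Matrix.mul_one, ← h]
  rw [hA, QuotientGroup.mk_mul, (QuotientGroup.eq_one_iff c).mpr hcen, mul_one]

lemma lift_proportional (A B : GL (Fin 2) K)
    (h : (QuotientGroup.mk A : PGL2 K) = QuotientGroup.mk B) :
    ∃ lam : K, lam ≠ 0 ∧ (↑B : Matrix (Fin 2) (Fin 2) K)
      = lam • (↑A : Matrix (Fin 2) (Fin 2) K) := by
  have hmem : A⁻¹ * B ∈ Subgroup.center (GL (Fin 2) K) := QuotientGroup.eq.mp h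
  obtain ⟨lam, hlam, hz⟩ := center_eq_scalar _ hmem
  refine ⟨lam, hlam, ?_⟩
  have hB : B = A * (A⁻¹ * B) := by group
  rw [hB, Units.val_mul, hz, Matrix.mul_smul, Matrix.mul_one]

lemma coeff_prod_homog {ι : Type*} (t : Finset ι)
    (L : ι → MvPolynomial (Fin 2) (MvPolynomial (Fin 2) K))
    (hL : ∀ i ∈ t, ∀ m, ((L i).coeff m).IsHomogeneous 1) :
    ∀ m, ((∏ i ∈ t, L i).coeff m).IsHomogeneous t.card := by
  classical
  induction t using Finset.induction_on with
  | empty =>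
    intro m
    rw [Finset.prod_empty, Finset.card_empty, coeff_one]
    split_ifs
    · exact isHomogeneous_one _ _
    · exact isHomogeneous_zero _ _ _
  | @insert a s ha ih =>
    intro m
    rw [Finset.prod_insert ha, Finset.card_insert_of_notMem ha, coeff_mul]
    apply IsHomogeneous.sum
    intro d _
    have h1 := hL a (Finset.mem_insert_self a s) d.1
    have h2 := ih (fun i hi m' => hL i (Finset.mem_insert_of_mem hi) m') d.2
    have h3 := h1.mul h2
    rwa [add_comm] at h3

lemma coeff_Lm_homog (M : Matrix (Fin 2) (Fin 2) K) (m : Fin 2 →₀ ℕ) :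
    ((Lm M).coeff m).IsHomogeneous 1 := by
  rw [Lm, coeff_add, coeff_C_mul, coeff_C_mul]
  apply IsHomogeneous.add
  · rw [coeff_X']
    split_ifs
    · rw [mul_one]
      exact (isHomogeneous_C_mul_X _ _).sub (isHomogeneous_C_mul_X _ _)
    · rw [mul_zero]
      exact isHomogeneous_zero _ _ _
  · rw [coeff_X']
    split_ifs
    · rw [mul_one]
      exact (isHomogeneous_C_mul_X _ _).sub (isHomogeneous_C_mul_X _ _)
    · rw [mul_zero]
      exact isHomogeneous_zero _ _ _

lemma mapE_Lm (y : Fin 2 → K) (M : Matrix (Fin 2) (Fin 2) K) :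
    MvPolynomial.map (eval y : MvPolynomial (Fin 2) K →+* K) (Lm M)
      = C (M 1 0 * y 0 - M 0 0 * y 1) * X 0 + C (M 1 1 * y 0 - M 0 1 * y 1) * X 1 := by
  simp [Lm, _root_.map_sub, _root_.map_add, _root_.map_mul, map_C, map_X]

lemma eval_eval_Lm (x y : Fin 2 → K) (M : Matrix (Fin 2) (Fin 2) K) :
    eval x (MvPolynomial.map (eval y : MvPolynomial (Fin 2) K →+* K) (Lm M))
      = (M 1 0 * y 0 - M 0 0 * y 1) * x 0 + (M 1 1 * y 0 - M 0 1 * y 1) * x 1 := by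
  rw [mapE_Lm]
  simp

end Phi

section Bridge

variable {K : Type*} [Field K]

lemma pgl_mk_smul (M : GL (Fin 2) K) (z : P1 K) :
    (QuotientGroup.mk M : PGL2 K) • z = M • z := rfl

lemma vne10 : (![1, 0] : Fin 2 → K) ≠ 0 := by
  intro h
  simpa using congrFun h 0

lemma vnec1 (c : K) : (![c, 1] : Fin 2 → K) ≠ 0 := by
  intro h
  simpa using congrFun h 1

/-- Enumeration of the projective line. -/
noncomputable def optFun : Option K → P1 K
  | none => Projectivization.mk K ![1, 0] vne10
  | some c => Projectivization.mk K ![c, 1] (vnec1 c)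

lemma optFun_bij : Function.Bijective (optFun (K := K)) := by
  constructor
  · intro o1 o2 hueq
    match o1, o2 with
    | none, none => rfl
    | none, some c =>
      exfalso
      rw [show optFun (K := K) none = Projectivization.mk K ![1, 0] vne10 from rfl,
        show optFun (some c) = Projectivization.mk K ![c, 1] (vnec1 c) from rfl,
        Projectivization.mk_eq_mk_iff'] at hueq
      obtain ⟨a, ha⟩ := hueq
      have h1 := congrFun ha 1
      have h0 := congrFun ha 0
      simp only [Pi.smul_apply, smul_eq_mul, Matrix.cons_val_one, Matrix.head_cons,
        Matrix.cons_val_zero, mul_one] at h0 h1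
      rw [h1, zero_mul] at h0
      exact zero_ne_one h0
    | some c, none =>
      exfalso
      rw [show optFun (K := K) none = Projectivization.mk K ![1, 0] vne10 from rfl,
        show optFun (some c) = Projectivization.mk K ![c, 1] (vnec1 c) from rfl,
        Projectivization.mk_eq_mk_iff'] at hueq
      obtain ⟨a, ha⟩ := hueq
      have h1 := congrFun ha 1
      have h0 := congrFun ha 0
      simp only [Pi.smul_apply, smul_eq_mul, Matrix.cons_val_one, Matrix.head_cons,
        Matrix.cons_val_zero, mul_one, mul_zero] at h0 h1
      exact zero_ne_one h1
    | some c1, some c2 =>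
      rw [show optFun (some c1) = Projectivization.mk K ![c1, 1] (vnec1 c1) from rfl,
        show optFun (some c2) = Projectivization.mk K ![c2, 1] (vnec1 c2) from rfl,
        Projectivization.mk_eq_mk_iff'] at hueq
      obtain ⟨a, ha⟩ := hueq
      have h1 := congrFun ha 1
      have h0 := congrFun ha 0
      simp only [Pi.smul_apply, smul_eq_mul, Matrix.cons_val_one, Matrix.head_cons,
        Matrix.cons_val_zero, mul_one] at h0 h1
      rw [h1, one_mul] at h0
      rw [h0]
  · intro z
    induction z using Projectivization.ind with
    | h v hv =>
      by_cases hv1 : v 1 = 0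
      · have hv0 : v 0 ≠ 0 := by
          intro hv0
          apply hv
          funext i
          fin_cases i
          · exact hv0
          · exact hv1
        refine ⟨none, ?_⟩
        show Projectivization.mk K ![1, 0] vne10 = Projectivization.mk K v hv
        rw [Projectivization.mk_eq_mk_iff']
        refine ⟨(v 0)⁻¹, ?_⟩
        funext i
        fin_cases i <;>
          simp [hv1, inv_mul_cancel₀ hv0]
      · refine ⟨some (v 0 * (v 1)⁻¹), ?_⟩
        show Projectivization.mk K ![v 0 * (v 1)⁻¹, 1] _ = Projectivization.mk K v hv
        rw [Projectivization.mk_eq_mk_iff']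
        refine ⟨(v 1)⁻¹, ?_⟩
        funext i
        fin_cases i <;>
          simp [inv_mul_cancel₀ hv1, mul_comm]

lemma card_P1 [Fintype K] : Nat.card (P1 K) = Fintype.card K + 1 := by
  have h := Nat.card_congr (Equiv.ofBijective _ (optFun_bij (K := K)))
  rw [← h, Nat.card_eq_fintype_card, Fintype.card_option]

end Bridge

end STAux
open STAux MvPolynomial in
theorem sharply_transitive_closed_under_mul
    {K : Type*} [Field K] [Fintype K] (S : Set (PGL2 K)) (hS : SharplyTransitive S)
    (h1 : (1 : PGL2 K) ∈ S) :
    ∀ g ∈ S, ∀ h ∈ S, g * h ∈ S := by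
  classical
  have hq2 : 2 ≤ Fintype.card K := Fintype.one_lt_card
  have hqne1 : Fintype.card K ≠ 1 := by omega
  have hSfin : S.Finite := Set.toFinite S
  set Sf : Finset (PGL2 K) := hSfin.toFinset with hSfdef
  have hmemSf : ∀ s : PGL2 K, s ∈ Sf ↔ s ∈ S := fun s => Set.Finite.mem_toFinset hSfin
  have hout_eq : ∀ s : PGL2 K, (QuotientGroup.mk (Quotient.out s) : PGL2 K) = s :=
    fun s => Quotient.out_eq' s
  set F : MvPolynomial (Fin 2) (MvPolynomial (Fin 2) K) :=
    ∏ s ∈ Sf, Lm ((Quotient.out s : GL (Fin 2) K) : Matrix (Fin 2) (Fin 2) K) with hFdef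
  have hvan : ∀ y x : Fin 2 → K,
      eval x (MvPolynomial.map (eval y : MvPolynomial (Fin 2) K →+* K) F) = 0 := by
    intro y x
    have hfac : ∃ s ∈ Sf, eval x (MvPolynomial.map (eval y : MvPolynomial (Fin 2) K →+* K)
        (Lm ((Quotient.out s : GL (Fin 2) K) : Matrix (Fin 2) (Fin 2) K))) = 0 := by
      by_cases hx : x = 0
      · refine ⟨1, (hmemSf 1).mpr h1, ?_⟩
        rw [eval_eval_Lm, hx]
        simp
      · by_cases hy : y = 0
        · refine ⟨1, (hmemSf 1).mpr h1, ?_⟩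
          rw [eval_eval_Lm, hy]
          simp
        · obtain ⟨s, ⟨hsS, hsxy⟩, -⟩ :=
            hS (Projectivization.mk K x hx) (Projectivization.mk K y hy)
          refine ⟨s, (hmemSf s).mpr hsS, ?_⟩
          rw [← hout_eq s, pgl_mk_smul, gl_smul_mk] at hsxy
          obtain ⟨a, ha⟩ := (Projectivization.mk_eq_mk_iff ..).mp hsxy
          have ha0 := congrFun ha 0
          have ha1 := congrFun ha 1
          simp only [Pi.smul_apply, Matrix.mulVec, dotProduct, Fin.sum_univ_two,
            Units.smul_def, smul_eq_mul] at ha0 ha1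
          rw [eval_eval_Lm]
          linear_combination y 1 * ha0 - y 0 * ha1
    obtain ⟨s, hsSf, hsz⟩ := hfac
    rw [hFdef, map_prod, map_prod]
    exact Finset.prod_eq_zero hsSf hsz
  have hcard : Sf.card = Fintype.card K + 1 := by
    have ebij : Function.Bijective (fun s : {x // x ∈ Sf} => (s.1 : PGL2 K) • pt10 K) := by
      constructor
      · intro s t hst
        obtain ⟨u, -, huniq⟩ := hS (pt10 K) ((s.1 : PGL2 K) • pt10 K)
        have hs' := huniq s.1 ⟨(hmemSf _).mp s.2, rfl⟩
        have ht' := huniq t.1 ⟨(hmemSf _).mp t.2, hst.symm⟩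
        exact Subtype.ext (hs'.trans ht'.symm)
      · intro z
        obtain ⟨u, ⟨huS, huz⟩, -⟩ := hS (pt10 K) z
        exact ⟨⟨u, (hmemSf u).mpr huS⟩, huz⟩
    have h1' : Sf.card = Nat.card {x // x ∈ Sf} := by
      rw [Nat.card_eq_fintype_card, Fintype.card_coe]
    rw [h1', Nat.card_congr (Equiv.ofBijective _ ebij), card_P1]
  have hFhomog : ∀ y : Fin 2 → K,
      (MvPolynomial.map (eval y : MvPolynomial (Fin 2) K →+* K) F).IsHomogeneous
        (Fintype.card K + 1) := by
    intro y
    rw [hFdef, map_prod]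
    have hp := MvPolynomial.IsHomogeneous.prod Sf
      (fun s => MvPolynomial.map (eval y : MvPolynomial (Fin 2) K →+* K)
        (Lm ((Quotient.out s : GL (Fin 2) K) : Matrix (Fin 2) (Fin 2) K)))
      (fun _ => 1)
      (fun s _ => by
        show (MvPolynomial.map (eval y : MvPolynomial (Fin 2) K →+* K)
          (Lm ((Quotient.out s : GL (Fin 2) K) : Matrix (Fin 2) (Fin 2) K))).IsHomogeneous 1
        rw [mapE_Lm]
        exact (isHomogeneous_C_mul_X _ _).add (isHomogeneous_C_mul_X _ _))
    rw [Finset.sum_const, smul_eq_mul, mul_one, hcard] at hp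
    exact hp
  have hmapF : ∀ y : Fin 2 → K, ∃ μ : K,
      MvPolynomial.map (eval y : MvPolynomial (Fin 2) K →+* K) F
        = C μ * PP (Fintype.card K) :=
    fun y => homog_eval_zero _ (hFhomog y) (fun x => hvan y x)
  have hcoeffhom : ∀ d : Fin 2 →₀ ℕ,
      (MvPolynomial.coeff d F).IsHomogeneous (Fintype.card K + 1) := by
    intro d
    have hp := coeff_prod_homog Sf _ (fun s _ m => coeff_Lm_homog
      ((Quotient.out s : GL (Fin 2) K) : Matrix (Fin 2) (Fin 2) K) m) d
    rw [hcard] at hp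
    rw [hFdef]
    exact hp
  have hPPq1 : MvPolynomial.coeff (dd (Fintype.card K) 1)
      (PP (Fintype.card K) : MvPolynomial (Fin 2) K) = 1 := by
    rw [coeff_PP, if_pos rfl, if_neg (dd_q1_ne_dd_1q hqne1)]
    norm_num
  have hPP1q : MvPolynomial.coeff (dd 1 (Fintype.card K))
      (PP (Fintype.card K) : MvPolynomial (Fin 2) K) = -1 := by
    rw [coeff_PP, if_neg (Ne.symm (dd_q1_ne_dd_1q hqne1)), if_pos rfl]
    norm_num
  have hPPne : (PP (Fintype.card K) : MvPolynomial (Fin 2) K) ≠ 0 := by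
    intro hz
    have hz' := congrArg (MvPolynomial.coeff (dd (Fintype.card K) 1)) hz
    rw [hPPq1, coeff_zero] at hz'
    exact one_ne_zero hz'
  have h_nonspec : ∀ d : Fin 2 →₀ ℕ, d ≠ dd (Fintype.card K) 1 → d ≠ dd 1 (Fintype.card K) →
      ∃ γ : K, MvPolynomial.coeff d F = C γ * PP (Fintype.card K) := by
    intro d hd1 hd2
    apply homog_eval_zero _ (hcoeffhom d)
    intro y
    obtain ⟨μ, hμ⟩ := hmapF y
    have hco := congrArg (MvPolynomial.coeff d) hμ
    rw [coeff_map, coeff_C_mul, coeff_PP, if_neg hd1, if_neg hd2] at hco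
    simpa using hco
  have h_spec : ∃ δ : K,
      MvPolynomial.coeff (dd (Fintype.card K) 1) F
        + MvPolynomial.coeff (dd 1 (Fintype.card K)) F = C δ * PP (Fintype.card K) := by
    apply homog_eval_zero _ ((hcoeffhom _).add (hcoeffhom _))
    intro y
    obtain ⟨μ, hμ⟩ := hmapF y
    have hA := congrArg (MvPolynomial.coeff (dd (Fintype.card K) 1)) hμ
    have hB := congrArg (MvPolynomial.coeff (dd 1 (Fintype.card K))) hμ
    rw [coeff_map, coeff_C_mul, hPPq1] at hA
    rw [coeff_map, coeff_C_mul, hPP1q] at hB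
    rw [_root_.map_add, hA, hB]
    ring
  obtain ⟨δ, hδ⟩ := h_spec
  set aP : MvPolynomial (Fin 2) K := MvPolynomial.coeff (dd (Fintype.card K) 1) F with haPdef
  have hγex : ∀ d : Fin 2 →₀ ℕ, ∃ γ : K,
      d ≠ dd (Fintype.card K) 1 → d ≠ dd 1 (Fintype.card K) →
        MvPolynomial.coeff d F = C γ * PP (Fintype.card K) := by
    intro d
    by_cases hd1 : d = dd (Fintype.card K) 1
    · exact ⟨0, fun hcon => absurd hd1 hcon⟩
    by_cases hd2 : d = dd 1 (Fintype.card K)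
    · exact ⟨0, fun _ hcon => absurd hd2 hcon⟩
    obtain ⟨γ, hγ⟩ := h_nonspec d hd1 hd2
    exact ⟨γ, fun _ _ => hγ⟩
  choose γf hγf using hγex
  set tset : Finset (Fin 2 →₀ ℕ) :=
    (F.support.erase (dd (Fintype.card K) 1)).erase (dd 1 (Fintype.card K)) with htset
  set bP : MvPolynomial (Fin 2) K :=
    (∑ d ∈ tset, monomial d (γf d)) + monomial (dd 1 (Fintype.card K)) δ with hbPdef
  have hbcoeff : ∀ d' : Fin 2 →₀ ℕ, MvPolynomial.coeff d' bP
      = (if d' ∈ tset then γf d' else 0) + (if d' = dd 1 (Fintype.card K) then δ else 0) := by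
    intro d'
    rw [hbPdef, coeff_add, coeff_sum]
    congr 1
    · calc ∑ d ∈ tset, MvPolynomial.coeff d' (monomial d (γf d))
          = ∑ d ∈ tset, if d = d' then γf d else 0 :=
            Finset.sum_congr rfl (fun d _ => coeff_monomial _ _ _)
      _ = if d' ∈ tset then γf d' else 0 := Finset.sum_ite_eq' tset d' γf
    · rw [coeff_monomial]
      simp [eq_comm]
  have hstruct : F = C aP * (PP (Fintype.card K) : MvPolynomial (Fin 2) (MvPolynomial (Fin 2) K))
      + C (PP (Fintype.card K) : MvPolynomial (Fin 2) K)
        * MvPolynomial.map (C : K →+* MvPolynomial (Fin 2) K) bP := by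
    apply MvPolynomial.ext
    intro d
    rw [coeff_add, coeff_C_mul, coeff_C_mul, coeff_map, hbcoeff, coeff_PP]
    by_cases hd1 : d = dd (Fintype.card K) 1
    · subst hd1
      rw [if_pos rfl, if_neg (dd_q1_ne_dd_1q hqne1)]
      have hnt : dd (Fintype.card K) 1 ∉ tset := by
        rw [htset]
        intro hmem
        exact (Finset.mem_erase.mp (Finset.mem_erase.mp hmem).2).1 rfl
      rw [if_neg hnt, if_neg (dd_q1_ne_dd_1q hqne1)]
      simp [haPdef]
    · by_cases hd2 : d = dd 1 (Fintype.card K)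
      · subst hd2
        rw [if_neg hd1, if_pos rfl]
        have hnt : dd 1 (Fintype.card K) ∉ tset := Finset.notMem_erase _ _
        rw [if_neg hnt, if_pos rfl, zero_add]
        linear_combination hδ
      · rw [if_neg hd1, if_neg hd2, if_neg hd2]
        by_cases hds : d ∈ F.support
        · have hdt : d ∈ tset := by
            rw [htset]
            exact Finset.mem_erase.mpr ⟨hd2, Finset.mem_erase.mpr ⟨hd1, hds⟩⟩
          rw [if_pos hdt, hγf d hd1 hd2, add_zero]
          ring
        · have hdt : d ∉ tset := by
            rw [htset]
            intro hmem
            exact hds (Finset.mem_erase.mp (Finset.mem_erase.mp hmem).2).2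
          rw [if_neg hdt, MvPolynomial.notMem_support_iff.mp hds]
          simp
  have hPPT : ∀ Mv : Matrix (Fin 2) (Fin 2) K,
      phiM Mv (PP (Fintype.card K) : MvPolynomial (Fin 2) (MvPolynomial (Fin 2) K))
        = (PP (Fintype.card K) : MvPolynomial (Fin 2) K) := by
    intro Mv
    rw [PP, PP, _root_.map_sub, _root_.map_mul, _root_.map_mul, _root_.map_pow, _root_.map_pow,
      phiM_X, phiM_X]
  have hphiF : ∀ Mv : Matrix (Fin 2) (Fin 2) K, phiM Mv F
      = subM Mv aP * PP (Fintype.card K) + C Mv.det * (PP (Fintype.card K) * bP) := by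
    intro Mv
    rw [hstruct, _root_.map_add, _root_.map_mul, _root_.map_mul, phiM_C, phiM_C, phiM_map_C,
      subM_PP, hPPT]
    ring
  have hprodF : ∀ Mv : Matrix (Fin 2) (Fin 2) K, phiM Mv F
      = ∏ s ∈ Sf, phiM Mv (Lm ((Quotient.out s : GL (Fin 2) K) : Matrix (Fin 2) (Fin 2) K)) := by
    intro Mv
    rw [hFdef, map_prod]
  have hvanish : ∀ A : GL (Fin 2) K, (QuotientGroup.mk A : PGL2 K) ∈ S →
      phiM (↑A : Matrix (Fin 2) (Fin 2) K) F = 0 := by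
    intro A hA
    rw [hprodF]
    apply Finset.prod_eq_zero ((hmemSf _).mpr hA)
    obtain ⟨lam, hlam, hprop⟩ :=
      lift_proportional A (Quotient.out (QuotientGroup.mk A : PGL2 K)) (hout_eq _).symm
    exact phiM_Lm_smul _ _ lam hprop
  have hid0 : phiM (1 : Matrix (Fin 2) (Fin 2) K) F = 0 := by
    have hmk1 : (QuotientGroup.mk (1 : GL (Fin 2) K) : PGL2 K) = 1 := rfl
    have hv1 := hvanish 1 (by rw [hmk1]; exact h1)
    rwa [Units.val_one] at hv1
  have hbaP : bP = -aP := by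
    have h0 := hid0
    rw [hphiF, subM_one, Matrix.det_one, _root_.map_one, one_mul] at h0
    have h1' : (PP (Fintype.card K) : MvPolynomial (Fin 2) K) * (aP + bP) = 0 := by
      linear_combination h0
    rcases mul_eq_zero.mp h1' with hz | hz
    · exact absurd hz hPPne
    · exact eq_neg_of_add_eq_zero_right hz
  have hdag : ∀ A : GL (Fin 2) K, (QuotientGroup.mk A : PGL2 K) ∈ S →
      subM (↑A : Matrix (Fin 2) (Fin 2) K) aP
        = C ((↑A : Matrix (Fin 2) (Fin 2) K).det) * aP := by
    intro A hA
    have h0 := hvanish A hA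
    rw [hphiF, hbaP] at h0
    have h1' : (subM (↑A : Matrix (Fin 2) (Fin 2) K) aP
        - C ((↑A : Matrix (Fin 2) (Fin 2) K).det) * aP) * PP (Fintype.card K) = 0 := by
      linear_combination h0
    rcases mul_eq_zero.mp h1' with hz | hz
    · exact sub_eq_zero.mp hz
    · exact absurd hz hPPne
  have hconv : ∀ A : GL (Fin 2) K,
      subM (↑A : Matrix (Fin 2) (Fin 2) K) aP
          = C ((↑A : Matrix (Fin 2) (Fin 2) K).det) * aP →
        (QuotientGroup.mk A : PGL2 K) ∈ S := by
    intro A hA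
    have h0 : phiM (↑A : Matrix (Fin 2) (Fin 2) K) F = 0 := by
      rw [hphiF, hbaP, hA]
      ring
    rw [hprodF] at h0
    obtain ⟨s, hsSf, hsz⟩ := Finset.prod_eq_zero_iff.mp h0
    have hdetA : IsUnit ((↑A : Matrix (Fin 2) (Fin 2) K)).det :=
      (Matrix.isUnit_iff_isUnit_det _).mp A.isUnit
    have hdetB : IsUnit ((↑(Quotient.out s : GL (Fin 2) K) : Matrix (Fin 2) (Fin 2) K)).det :=
      (Matrix.isUnit_iff_isUnit_det _).mp (Quotient.out s : GL (Fin 2) K).isUnit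
    obtain ⟨lam, hlam, hMv⟩ := factor_zero_prop _ _ hdetA hdetB hsz
    have heq : (QuotientGroup.mk A : PGL2 K)
        = QuotientGroup.mk (Quotient.out s : GL (Fin 2) K) :=
      mk_eq_of_smul_eq _ _ lam hlam hMv
    rw [heq, hout_eq]
    exact (hmemSf s).mp hsSf
  intro g hg h hh
  have hgd := hdag (Quotient.out g) (by rw [hout_eq]; exact hg)
  have hhd := hdag (Quotient.out h) (by rw [hout_eq]; exact hh)
  have hcomp : subM (↑(Quotient.out g * Quotient.out h : GL (Fin 2) K)
        : Matrix (Fin 2) (Fin 2) K) aP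
      = C ((↑(Quotient.out g * Quotient.out h : GL (Fin 2) K)
        : Matrix (Fin 2) (Fin 2) K).det) * aP := by
    rw [Units.val_mul, ← subM_subM, hgd, _root_.map_mul, subM_C, hhd, Matrix.det_mul,
      _root_.map_mul]
    ring
  have hfin := hconv _ hcomp
  rwa [QuotientGroup.mk_mul, hout_eq, hout_eq] at hfin

end
end
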